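/- arXiv:1004.1627 — 8 statements merged into one kernel-verified Lean document; each statement's English description precedes it below -/
import Mathlib

section
/- Let m₁, m₂ be positive integers and P the (m₁+m₂)×(m₁+m₂) block projection matrix P = [[I_{m₁}, 0], [0, 0]]. Let p, q, q̄, p̄ be smooth matrix-valued functions on ℝ² (variables (x,t)) of sizes m₁×m₁, m₁×m₂, m₂×m₁, m₂×m₂ respectively, and set φ = [[p, q], [−q̄, −p̄]]. Then φ satisfies the equation [P, φ_t] = {P, φ_{xx}} + 2 (P φ_x)[P, φ] − 2 [P, φ] φ_x P identically if and only if (p_x + q q̄)_x = 0, q_t = q_{xx} + 2 p_x q, and q̄_t = −q̄_{xx} − 2 q̄ p_x hold. In particular, if additionally p_x = −q q̄, then φ satisfies this equation if and only if the matrix NLS system q_t = q_{xx} − 2 q q̄ q, q̄_t = −q̄_{xx} + 2 q̄ q q̄ holds. -/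
open Matrix

noncomputable section

/-- Entrywise partial derivative with respect to the first variable. -/
def pd1 {α β : Type*} (M : ℝ → ℝ → Matrix α β ℂ) : ℝ → ℝ → Matrix α β ℂ :=
  fun x t => Matrix.of fun i j => deriv (fun x' => M x' t i j) x

/-- Entrywise partial derivative with respect to the second variable. -/
def pd2 {α β : Type*} (M : ℝ → ℝ → Matrix α β ℂ) : ℝ → ℝ → Matrix α β ℂ :=
  fun x t => Matrix.of fun i j => deriv (fun t' => M x t' i j) t

/-- Entrywise smoothness of a matrix-valued function on ℝ². -/
def MSmooth {α β : Type*} (M : ℝ → ℝ → Matrix α β ℂ) : Prop :=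
  ∀ i j, ContDiff ℝ (⊤ : ℕ∞) fun v : ℝ × ℝ => M v.1 v.2 i j

/-- The equation `[P, φ_t] = {P, φ_xx} + 2 (P φ_x)[P, φ] − 2 [P, φ] φ_x P`,
imposed identically on ℝ². -/
def PhiEq {n : Type*} [Fintype n] (P : Matrix n n ℂ) (φ : ℝ → ℝ → Matrix n n ℂ) : Prop :=
  ∀ x t : ℝ,
    P * pd2 φ x t - pd2 φ x t * P =
      (P * pd1 (pd1 φ) x t + pd1 (pd1 φ) x t * P)
        + (2 : ℂ) • ((P * pd1 φ x t) * (P * φ x t - φ x t * P))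
        - (2 : ℂ) • ((P * φ x t - φ x t * P) * (pd1 φ x t * P))

section Aux

variable {α β γ : Type*}

lemma pd1_fromBlocks (A : ℝ → ℝ → Matrix α α ℂ) (B : ℝ → ℝ → Matrix α β ℂ)
    (C : ℝ → ℝ → Matrix β α ℂ) (D : ℝ → ℝ → Matrix β β ℂ) :
    pd1 (fun x t => Matrix.fromBlocks (A x t) (B x t) (-(C x t)) (-(D x t))) =
      fun x t => Matrix.fromBlocks (pd1 A x t) (pd1 B x t) (-(pd1 C x t)) (-(pd1 D x t)) := by
  funext x t
  ext i j
  cases i <;> cases j <;> simp [pd1, deriv.neg]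

lemma pd2_fromBlocks (A : ℝ → ℝ → Matrix α α ℂ) (B : ℝ → ℝ → Matrix α β ℂ)
    (C : ℝ → ℝ → Matrix β α ℂ) (D : ℝ → ℝ → Matrix β β ℂ) :
    pd2 (fun x t => Matrix.fromBlocks (A x t) (B x t) (-(C x t)) (-(D x t))) =
      fun x t => Matrix.fromBlocks (pd2 A x t) (pd2 B x t) (-(pd2 C x t)) (-(pd2 D x t)) := by
  funext x t
  ext i j
  cases i <;> cases j <;> simp [pd2, deriv.neg]

lemma msmooth_hasDerivAt1 {M : ℝ → ℝ → Matrix α β ℂ} (hM : MSmooth M) (x t : ℝ) (i : α) (j : β) :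
    HasDerivAt (fun x' => M x' t i j) (pd1 M x t i j) x := by
  have hg : ContDiff ℝ (⊤ : ℕ∞) (fun x' : ℝ => M x' t i j) :=
    (hM i j).comp (contDiff_id.prodMk contDiff_const)
  have hd : Differentiable ℝ (fun x' : ℝ => M x' t i j) :=
    hg.differentiable (by simp)
  simpa [pd1] using (hd x).hasDerivAt

lemma msmooth_hasDerivAt2 {M : ℝ → ℝ → Matrix α β ℂ} (hM : MSmooth M) (x t : ℝ) (i : α) (j : β) :
    HasDerivAt (fun x' => pd1 M x' t i j) (pd1 (pd1 M) x t i j) x := by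
  have hg : ContDiff ℝ (⊤ : ℕ∞) (fun x' : ℝ => M x' t i j) :=
    (hM i j).comp (contDiff_id.prodMk contDiff_const)
  have hd : Differentiable ℝ (deriv (fun x' : ℝ => M x' t i j)) :=
    ((contDiff_infty_iff_deriv.mp hg).2).differentiable (by simp)
  simpa [pd1] using (hd x).hasDerivAt

lemma msmooth_mul_hasDerivAt [Fintype β] {A : ℝ → ℝ → Matrix α β ℂ} {B : ℝ → ℝ → Matrix β γ ℂ}
    (hA : MSmooth A) (hB : MSmooth B) (x t : ℝ) (i : α) (j : γ) :
    HasDerivAt (fun x' => (A x' t * B x' t) i j)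
      ((pd1 A x t * B x t + A x t * pd1 B x t) i j) x := by
  simp only [Matrix.mul_apply, Matrix.add_apply, ← Finset.sum_add_distrib]
  exact HasDerivAt.fun_sum fun k _ =>
    (msmooth_hasDerivAt1 hA x t i k).mul (msmooth_hasDerivAt1 hB x t k j)

lemma pd1_split {α₁ : Type*} [Fintype β] {p : ℝ → ℝ → Matrix α₁ α₁ ℂ}
    {A : ℝ → ℝ → Matrix α₁ β ℂ} {B : ℝ → ℝ → Matrix β α₁ ℂ}
    (hp : MSmooth p) (hA : MSmooth A) (hB : MSmooth B) (x t : ℝ) :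
    pd1 (fun x t => pd1 p x t + A x t * B x t) x t =
      pd1 (pd1 p) x t + (pd1 A x t * B x t + A x t * pd1 B x t) := by
  ext i j
  have h1 := msmooth_hasDerivAt2 hp x t i j
  have h2 := msmooth_mul_hasDerivAt hA hB x t i j
  have := (h1.add h2).deriv
  simp only [pd1, Matrix.of_apply, Matrix.add_apply] at this ⊢
  exact this

end Aux

theorem statement0 (m₁ m₂ : ℕ) (hm₁ : 0 < m₁) (hm₂ : 0 < m₂)
    (p : ℝ → ℝ → Matrix (Fin m₁) (Fin m₁) ℂ)
    (q : ℝ → ℝ → Matrix (Fin m₁) (Fin m₂) ℂ)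
    (qb : ℝ → ℝ → Matrix (Fin m₂) (Fin m₁) ℂ)
    (pb : ℝ → ℝ → Matrix (Fin m₂) (Fin m₂) ℂ)
    (hp : MSmooth p) (hq : MSmooth q) (hqb : MSmooth qb) (hpb : MSmooth pb)
    (P : Matrix (Fin m₁ ⊕ Fin m₂) (Fin m₁ ⊕ Fin m₂) ℂ)
    (hP : P = Matrix.fromBlocks 1 0 0 0)
    (φ : ℝ → ℝ → Matrix (Fin m₁ ⊕ Fin m₂) (Fin m₁ ⊕ Fin m₂) ℂ)
    (hφ : φ = fun x t => Matrix.fromBlocks (p x t) (q x t) (-(qb x t)) (-(pb x t))) :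
    (PhiEq P φ ↔
      (∀ x t : ℝ,
        pd1 (fun x t => pd1 p x t + q x t * qb x t) x t = 0 ∧
        pd2 q x t = pd1 (pd1 q) x t + (2 : ℂ) • (pd1 p x t * q x t) ∧
        pd2 qb x t = -(pd1 (pd1 qb) x t) - (2 : ℂ) • (qb x t * pd1 p x t)))
    ∧ ((∀ x t : ℝ, pd1 p x t = -(q x t * qb x t)) →
       (PhiEq P φ ↔
         (∀ x t : ℝ,
           pd2 q x t = pd1 (pd1 q) x t - (2 : ℂ) • (q x t * qb x t * q x t) ∧
           pd2 qb x t = -(pd1 (pd1 qb) x t) + (2 : ℂ) • (qb x t * q x t * qb x t)))) := by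
  subst hP hφ
  have main : PhiEq (Matrix.fromBlocks 1 0 0 0)
      (fun x t => Matrix.fromBlocks (p x t) (q x t) (-(qb x t)) (-(pb x t))) ↔
      (∀ x t : ℝ,
        pd1 (fun x t => pd1 p x t + q x t * qb x t) x t = 0 ∧
        pd2 q x t = pd1 (pd1 q) x t + (2 : ℂ) • (pd1 p x t * q x t) ∧
        pd2 qb x t = -(pd1 (pd1 qb) x t) - (2 : ℂ) • (qb x t * pd1 p x t)) := by
    unfold PhiEq
    rw [pd2_fromBlocks p q qb pb, pd1_fromBlocks p q qb pb,
      pd1_fromBlocks (pd1 p) (pd1 q) (pd1 qb) (pd1 pb)]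
    apply forall_congr'
    intro x
    apply forall_congr'
    intro t
    rw [pd1_split hp hq hqb x t]
    simp only [Matrix.fromBlocks_multiply, Matrix.fromBlocks_add, Matrix.fromBlocks_smul,
      Matrix.fromBlocks_neg, sub_eq_add_neg, Matrix.fromBlocks_inj,
      Matrix.one_mul, Matrix.mul_one, Matrix.zero_mul, Matrix.mul_zero, one_mul, mul_one,
      zero_mul, mul_zero, add_zero, zero_add, neg_zero, neg_neg, mul_neg, neg_mul, smul_zero,
      Matrix.mul_neg, Matrix.neg_mul, add_neg_cancel, and_true, smul_neg]
    constructor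
    · rintro ⟨h1, h2, h3⟩
      refine ⟨?_, h2, h3⟩
      apply smul_right_injective (Matrix (Fin m₁) (Fin m₁) ℂ) (two_ne_zero : (2 : ℂ) ≠ 0)
      show (2 : ℂ) • _ = (2 : ℂ) • _
      rw [smul_zero, h1]
      module
    · rintro ⟨h1, h2, h3⟩
      refine ⟨?_, h2, h3⟩
      have h2G : (2 : ℂ) • (pd1 (pd1 p) x t + (pd1 q x t * qb x t + q x t * pd1 qb x t)) =
          0 := by rw [h1, smul_zero]
      rw [← h2G]
      module
  refine ⟨main, fun hpx => ?_⟩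
  rw [main]
  apply forall_congr'
  intro x
  apply forall_congr'
  intro t
  have h0 : pd1 (fun x t => pd1 p x t + q x t * qb x t) x t = 0 := by
    have : (fun (x t : ℝ) => pd1 p x t + q x t * qb x t) = fun _ _ => (0 : Matrix (Fin m₁) (Fin m₁) ℂ) := by
      funext x t
      rw [hpx]
      simp
    rw [this]
    ext i j
    simp [pd1]
  have hq2 : (2 : ℂ) • (pd1 p x t * q x t) = -((2 : ℂ) • (q x t * qb x t * q x t)) := by
    rw [hpx]
    simp [neg_mul, mul_assoc]
  have hq3 : (2 : ℂ) • (qb x t * pd1 p x t) = -((2 : ℂ) • (qb x t * q x t * qb x t)) := by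
    rw [hpx]
    rw [Matrix.mul_neg, smul_neg, neg_inj, Matrix.mul_assoc]
  rw [hq2, hq3]
  simp only [h0, true_and, sub_neg_eq_add, ← sub_eq_add_neg]
end
end

section
/- With the Sylvester data fixed, let Ξ(x) = exp(−x S) and Ξ̄(x) = exp(−x S̄), and assume that I_{n₁} − K Ξ̄(x) K̄ Ξ(x) and I_{n₂} − K̄ Ξ(x) K Ξ̄(x) are invertible for all x in an open interval. Define q(x) = U Ξ̄ (I_{n₂} − K̄ Ξ K Ξ̄)^{-1} V̄, q̄(x) = Ū Ξ (I_{n₁} − K Ξ̄ K̄ Ξ)^{-1} V, and p(x) = U Ξ̄ K̄ Ξ (I_{n₁} − K Ξ̄ K̄ Ξ)^{-1} V. Then p′(x) = −q(x) q̄(x) on that interval. -/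
open Matrix

noncomputable section

/-- Entrywise derivative of a matrix-valued function of one real variable. -/
def pd {α β : Type*} (M : ℝ → Matrix α β ℂ) : ℝ → Matrix α β ℂ :=
  fun x => Matrix.of fun i j => deriv (fun x' => M x' i j) x

section Aux

open NormedSpace

attribute [local instance] Matrix.linftyOpNormedAddCommGroup Matrix.linftyOpNormedSpace
  Matrix.linftyOpNormedRing Matrix.linftyOpNormedAlgebra

variable {k l r n : ℕ}

/-- matrix multiplication as a continuous bilinear map -/
noncomputable def mulCLM (k l r : ℕ) :
    Matrix (Fin k) (Fin l) ℂ →L[ℝ] Matrix (Fin l) (Fin r) ℂ →L[ℝ] Matrix (Fin k) (Fin r) ℂ :=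
  LinearMap.mkContinuous₂
    (LinearMap.mk₂ ℝ (· * ·) Matrix.add_mul (fun c A B => Matrix.smul_mul c A B)
      Matrix.mul_add (fun c A B => Matrix.mul_smul A c B)) 1
    (fun A B => by simpa using Matrix.linfty_opNorm_mul A B)

@[simp] lemma mulCLM_apply (A : Matrix (Fin k) (Fin l) ℂ) (B : Matrix (Fin l) (Fin r) ℂ) :
    mulCLM k l r A B = A * B := rfl

lemma HasDerivAt.matmul {f : ℝ → Matrix (Fin k) (Fin l) ℂ} {g : ℝ → Matrix (Fin l) (Fin r) ℂ}
    {f' g'} {x : ℝ} (hf : HasDerivAt f f' x) (hg : HasDerivAt g g' x) :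
    HasDerivAt (fun t => f t * g t) (f' * g x + f x * g') x := by
  have h := HasFDerivAt.comp_hasDerivAt x
    ((mulCLM k l r).isBoundedBilinearMap.hasFDerivAt (f x, g x)) (hf.prodMk hg)
  simp [Function.comp_def] at h
  rw [add_comm] at h
  exact h

lemma HasDerivAt.const_matmul {g : ℝ → Matrix (Fin l) (Fin r) ℂ} {g'} {x : ℝ}
    (C : Matrix (Fin k) (Fin l) ℂ) (hg : HasDerivAt g g' x) :
    HasDerivAt (fun t => C * g t) (C * g') x := by
  simpa using (hasDerivAt_const x C).matmul hg

lemma HasDerivAt.matmul_const {f : ℝ → Matrix (Fin k) (Fin l) ℂ} {f'} {x : ℝ}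
    (hf : HasDerivAt f f' x) (C : Matrix (Fin l) (Fin r) ℂ) :
    HasDerivAt (fun t => f t * C) (f' * C) x := by
  simpa using hf.matmul (hasDerivAt_const x C)

lemma hasDerivAt_expM (S : Matrix (Fin n) (Fin n) ℂ) (x : ℝ) :
    HasDerivAt (fun t : ℝ => exp (-((t : ℂ) • S)))
      (-(S * exp (-((x : ℂ) • S)))) x := by
  have h := hasDerivAt_exp_smul_const' (𝕂 := ℂ) (-S) (x : ℂ)
  simp only [smul_neg] at h
  have h2 := HasDerivAt.scomp (x := x) (h := fun y : ℝ => (y : ℂ)) h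
    Complex.ofRealCLM.hasDerivAt
  simp [neg_mul, Function.comp_def] at h2
  exact h2

lemma hasDerivAt_matinv {F : ℝ → Matrix (Fin n) (Fin n) ℂ} {F' : Matrix (Fin n) (Fin n) ℂ}
    {x : ℝ} (hu : IsUnit (F x)) (hF : HasDerivAt F F' x) :
    HasDerivAt (fun t => (F t)⁻¹) (-((F x)⁻¹ * F' * (F x)⁻¹)) x := by
  have heq : (fun t => (F t)⁻¹) = fun t => Ring.inverse (F t) := by
    funext t; exact Matrix.nonsing_inv_eq_ringInverse (A := F t)
  rw [heq]
  have h := HasFDerivAt.comp_hasDerivAt x (hasFDerivAt_ringInverse (𝕜 := ℝ) hu.unit) hF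
  have hcoe : ((hu.unit⁻¹ : (Matrix (Fin n) (Fin n) ℂ)ˣ) : Matrix (Fin n) (Fin n) ℂ)
      = (F x)⁻¹ := by
    rw [Matrix.coe_units_inv hu.unit, hu.unit_spec]
  simp [hcoe, Function.comp_def] at h
  exact h

lemma pd_eq {M : ℝ → Matrix (Fin k) (Fin l) ℂ} {M' : Matrix (Fin k) (Fin l) ℂ} {x : ℝ}
    (h : HasDerivAt M M' x) : pd M x = M' := by
  funext i j
  have hle : ∀ (N : Matrix (Fin k) (Fin l) ℂ), ‖N i j‖ ≤ 1 * ‖N‖ := by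
    intro N
    rw [one_mul]
    have h1 : ‖N i j‖₊ ≤ ‖N‖₊ := by
      rw [Matrix.linfty_opNNNorm_def]
      exact le_trans
        (Finset.single_le_sum (f := fun j' => ‖N i j'‖₊) (fun _ _ => zero_le)
          (Finset.mem_univ j))
        (Finset.le_sup (f := fun i => ∑ j : Fin l, ‖N i j‖₊) (Finset.mem_univ i))
    exact_mod_cast h1
  let e : Matrix (Fin k) (Fin l) ℂ →L[ℝ] ℂ :=
    LinearMap.mkContinuous
      { toFun := fun N => N i j, map_add' := fun _ _ => rfl, map_smul' := fun _ _ => rfl }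
      1 hle
  have h2 : HasDerivAt (fun t => M t i j) (M' i j) x :=
    HasFDerivAt.comp_hasDerivAt x (e.hasFDerivAt) h
  simp only [pd, Matrix.of_apply]
  exact h2.deriv

lemma commute_expM (S : Matrix (Fin n) (Fin n) ℂ) (x : ℝ) :
    S * exp (-((x : ℂ) • S)) = exp (-((x : ℂ) • S)) * S :=
  (((Commute.refl S).smul_right ((x : ℂ))).neg_right.exp_right)

lemma pd_main {m₁ n₁ n₂ : ℕ} (S : Matrix (Fin n₁) (Fin n₁) ℂ) (Sb : Matrix (Fin n₂) (Fin n₂) ℂ)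
    (U : Matrix (Fin m₁) (Fin n₂) ℂ) (V : Matrix (Fin n₁) (Fin m₁) ℂ)
    (K : Matrix (Fin n₁) (Fin n₂) ℂ) (Kb : Matrix (Fin n₂) (Fin n₁) ℂ) (x : ℝ)
    (hu : IsUnit (1 - K * exp (-((x : ℂ) • Sb)) * Kb * exp (-((x : ℂ) • S)))) :
    pd (fun t => U * exp (-((t : ℂ) • Sb)) * Kb * exp (-((t : ℂ) • S)) *
        (1 - K * exp (-((t : ℂ) • Sb)) * Kb * exp (-((t : ℂ) • S)))⁻¹ * V) x =
      ((U * -(Sb * exp (-((x : ℂ) • Sb))) * Kb * exp (-((x : ℂ) • S))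
          + U * exp (-((x : ℂ) • Sb)) * Kb * -(S * exp (-((x : ℂ) • S)))) *
        (1 - K * exp (-((x : ℂ) • Sb)) * Kb * exp (-((x : ℂ) • S)))⁻¹
        + U * exp (-((x : ℂ) • Sb)) * Kb * exp (-((x : ℂ) • S)) *
          -((1 - K * exp (-((x : ℂ) • Sb)) * Kb * exp (-((x : ℂ) • S)))⁻¹ *
            -(K * -(Sb * exp (-((x : ℂ) • Sb))) * Kb * exp (-((x : ℂ) • S))
              + K * exp (-((x : ℂ) • Sb)) * Kb * -(S * exp (-((x : ℂ) • S)))) *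
            (1 - K * exp (-((x : ℂ) • Sb)) * Kb * exp (-((x : ℂ) • S)))⁻¹)) * V := by
  have h1 := hasDerivAt_expM S x
  have h2 := hasDerivAt_expM Sb x
  have hA := (((h2.const_matmul K).matmul_const Kb).matmul h1).const_sub 1
  have hG := hasDerivAt_matinv hu hA
  have hD := ((((h2.const_matmul U).matmul_const Kb).matmul h1).matmul hG).matmul_const V
  exact pd_eq hD

end Aux

theorem statement1 (m₁ m₂ n₁ n₂ : ℕ)
    (hm₁ : 0 < m₁) (hm₂ : 0 < m₂) (hn₁ : 0 < n₁) (hn₂ : 0 < n₂)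
    (S : Matrix (Fin n₁) (Fin n₁) ℂ) (Sb : Matrix (Fin n₂) (Fin n₂) ℂ)
    (U : Matrix (Fin m₁) (Fin n₂) ℂ) (Ub : Matrix (Fin m₂) (Fin n₁) ℂ)
    (V : Matrix (Fin n₁) (Fin m₁) ℂ) (Vb : Matrix (Fin n₂) (Fin m₂) ℂ)
    (K : Matrix (Fin n₁) (Fin n₂) ℂ) (Kb : Matrix (Fin n₂) (Fin n₁) ℂ)
    (hSyl : S * K + K * Sb = V * U) (hSylb : Sb * Kb + Kb * S = Vb * Ub)
    (Ξ : ℝ → Matrix (Fin n₁) (Fin n₁) ℂ)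
    (hΞ : Ξ = fun x : ℝ => NormedSpace.exp (-((x : ℂ) • S)))
    (Ξb : ℝ → Matrix (Fin n₂) (Fin n₂) ℂ)
    (hΞb : Ξb = fun x : ℝ => NormedSpace.exp (-((x : ℂ) • Sb)))
    (a b : ℝ) (hab : a < b)
    (hinv₁ : ∀ x ∈ Set.Ioo a b, IsUnit (1 - K * Ξb x * Kb * Ξ x))
    (hinv₂ : ∀ x ∈ Set.Ioo a b, IsUnit (1 - Kb * Ξ x * K * Ξb x))
    (q : ℝ → Matrix (Fin m₁) (Fin m₂) ℂ)
    (hq : q = fun x => U * Ξb x * (1 - Kb * Ξ x * K * Ξb x)⁻¹ * Vb)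
    (qb : ℝ → Matrix (Fin m₂) (Fin m₁) ℂ)
    (hqb : qb = fun x => Ub * Ξ x * (1 - K * Ξb x * Kb * Ξ x)⁻¹ * V)
    (p : ℝ → Matrix (Fin m₁) (Fin m₁) ℂ)
    (hp : p = fun x => U * Ξb x * Kb * Ξ x * (1 - K * Ξb x * Kb * Ξ x)⁻¹ * V) :
    ∀ x ∈ Set.Ioo a b, pd p x = -(q x * qb x) := by
  subst hΞ hΞb hq hqb hp
  intro x hx
  have hu : IsUnit (1 - K * NormedSpace.exp (-((x : ℂ) • Sb)) * Kb *
      NormedSpace.exp (-((x : ℂ) • S))) := by simpa using hinv₁ x hx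
  beta_reduce
  rw [pd_main S Sb U V K Kb x hu]
  set E1 : Matrix (Fin n₁) (Fin n₁) ℂ := NormedSpace.exp (-((x : ℂ) • S)) with hE1
  set E2 : Matrix (Fin n₂) (Fin n₂) ℂ := NormedSpace.exp (-((x : ℂ) • Sb)) with hE2
  set G : Matrix (Fin n₁) (Fin n₁) ℂ := (1 - K * E2 * Kb * E1)⁻¹ with hGdef
  have hdet : IsUnit (1 - K * E2 * Kb * E1).det := (Matrix.isUnit_iff_isUnit_det _).mp hu
  have hFG : (1 - K * E2 * Kb * E1) * G = 1 := Matrix.mul_nonsing_inv _ hdet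
  have hc2 : Sb * E2 = E2 * Sb := commute_expM Sb x
  have hGb : (1 - Kb * E1 * K * E2)⁻¹ = 1 + Kb * (E1 * (G * (K * E2))) := by
    refine Matrix.inv_eq_right_inv ?_
    have step : (1 - Kb * E1 * K * E2) * (1 + Kb * (E1 * (G * (K * E2))))
        = 1 - Kb * (E1 * (K * E2)) + Kb * (E1 * (((1 - K * E2 * Kb * E1) * G) * (K * E2))) := by
      simp only [Matrix.mul_add, Matrix.add_mul, Matrix.sub_mul, Matrix.mul_sub,
        Matrix.mul_one, Matrix.one_mul, Matrix.mul_assoc]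
    rw [step, hFG]
    simp only [Matrix.one_mul]
    abel
  have hswap : E2 * (Sb * (Kb * (E1 * (G * V)))) = Sb * (E2 * (Kb * (E1 * (G * V)))) := by
    rw [← Matrix.mul_assoc, ← hc2, Matrix.mul_assoc]
  have keyA : U * (Sb * (E2 * (Kb * (E1 * (G * V))))) + U * (E2 * (Kb * (S * (E1 * (G * V)))))
      = U * (E2 * (Vb * (Ub * (E1 * (G * V))))) := by
    have k0 : U * (E2 * ((Sb * Kb + Kb * S) * (E1 * (G * V))))
        = U * (E2 * ((Vb * Ub) * (E1 * (G * V)))) := by rw [hSylb]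
    simp only [Matrix.add_mul, Matrix.mul_add, Matrix.mul_assoc] at k0
    rw [hswap] at k0
    exact k0
  have keyB : U * (E2 * (Kb * (E1 * (G * (K * (Sb * (E2 * (Kb * (E1 * (G * V))))))))))
        + U * (E2 * (Kb * (E1 * (G * (K * (E2 * (Kb * (S * (E1 * (G * V))))))))))
      = U * (E2 * (Kb * (E1 * (G * (K * (E2 * (Vb * (Ub * (E1 * (G * V)))))))))) := by
    have k1 : U * (E2 * (Kb * (E1 * (G * (K * (E2 * ((Sb * Kb + Kb * S) * (E1 * (G * V)))))))))
        = U * (E2 * (Kb * (E1 * (G * (K * (E2 * ((Vb * Ub) * (E1 * (G * V))))))))) := by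
      rw [hSylb]
    simp only [Matrix.add_mul, Matrix.mul_add, Matrix.mul_assoc] at k1
    rw [hswap] at k1
    exact k1
  rw [hGb]
  simp only [Matrix.mul_add, Matrix.add_mul, Matrix.mul_neg, Matrix.neg_mul, neg_neg,
    Matrix.mul_one, Matrix.one_mul, Matrix.mul_assoc, neg_add]
  rw [← keyA, ← keyB]
  abel
end
end

section
/- With the Sylvester data fixed, let Ξ(x,t) = exp(−(x S + t S²)) and Ξ̄(x,t) = exp(−x S̄ + t S̄²), and assume that I_{n₁} − K Ξ̄ K̄ Ξ and I_{n₂} − K̄ Ξ K Ξ̄ are invertible for all (x,t) ∈ ℝ². Then q = U Ξ̄ (I_{n₂} − K̄ Ξ K Ξ̄)^{-1} V̄ and q̄ = Ū Ξ (I_{n₁} − K Ξ̄ K̄ Ξ)^{-1} V solve the matrix NLS system q_t = q_{xx} − 2 q q̄ q and q̄_t = −q̄_{xx} + 2 q̄ q q̄. -/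
open Matrix

noncomputable section

open NormedSpace

set_option linter.unusedVariables false

/-- Entrywise derivative predicate for matrix-valued functions of a real variable. -/
def MHD {α β : Type*} (F : ℝ → Matrix α β ℂ) (F' : Matrix α β ℂ) (x : ℝ) : Prop :=
  ∀ i j, HasDerivAt (fun x' => F x' i j) (F' i j) x

namespace MHD

variable {α β γ : Type*} {x : ℝ}

theorem const (C : Matrix α β ℂ) : MHD (fun _ => C) 0 x :=
  fun i j => by simpa using hasDerivAt_const x (C i j)

theorem add {F G : ℝ → Matrix α β ℂ} {F' G' : Matrix α β ℂ}
    (hF : MHD F F' x) (hG : MHD G G' x) : MHD (fun x' => F x' + G x') (F' + G') x :=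
  fun i j => by simpa using (hF i j).fun_add (hG i j)

theorem neg {F : ℝ → Matrix α β ℂ} {F' : Matrix α β ℂ}
    (hF : MHD F F' x) : MHD (fun x' => -F x') (-F') x :=
  fun i j => by simpa using (hF i j).fun_neg

theorem sub {F G : ℝ → Matrix α β ℂ} {F' G' : Matrix α β ℂ}
    (hF : MHD F F' x) (hG : MHD G G' x) : MHD (fun x' => F x' - G x') (F' - G') x :=
  fun i j => by simpa using (hF i j).fun_sub (hG i j)

theorem smul (c : ℂ) {F : ℝ → Matrix α β ℂ} {F' : Matrix α β ℂ}
    (hF : MHD F F' x) : MHD (fun x' => c • F x') (c • F') x :=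
  fun i j => by simpa [Matrix.smul_apply] using (hF i j).const_mul c

theorem mul [Fintype β] {F : ℝ → Matrix α β ℂ} {G : ℝ → Matrix β γ ℂ}
    {F' : Matrix α β ℂ} {G' : Matrix β γ ℂ}
    (hF : MHD F F' x) (hG : MHD G G' x) :
    MHD (fun x' => F x' * G x') (F' * G x + F x * G') x := by
  intro i j
  have : ∀ b ∈ Finset.univ, HasDerivAt (fun x' => F x' i b * G x' b j)
      (F' i b * G x b j + F x i b * G' b j) x :=
    fun b _ => (hF i b).mul (hG b j)
  simpa [Matrix.mul_apply, Matrix.add_apply, Finset.sum_add_distrib] using HasDerivAt.fun_sum this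

theorem const_mul [Fintype β] (C : Matrix α β ℂ) {G : ℝ → Matrix β γ ℂ} {G' : Matrix β γ ℂ}
    (hG : MHD G G' x) : MHD (fun x' => C * G x') (C * G') x := by
  simpa using (MHD.const C).mul hG

theorem mul_const [Fintype β] {F : ℝ → Matrix α β ℂ} {F' : Matrix α β ℂ} (C : Matrix β γ ℂ)
    (hF : MHD F F' x) : MHD (fun x' => F x' * C) (F' * C) x := by
  simpa using hF.mul (MHD.const C)

theorem congr_deriv {F : ℝ → Matrix α β ℂ} {F' F'' : Matrix α β ℂ}
    (hF : MHD F F' x) (h : F' = F'') : MHD F F'' x := h ▸ hF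

theorem unique {F : ℝ → Matrix α β ℂ} {F' F'' : Matrix α β ℂ}
    (h1 : MHD F F' x) (h2 : MHD F F'' x) : F' = F'' :=
  Matrix.ext fun i j => (h1 i j).unique (h2 i j)

theorem differentiableAt {F : ℝ → Matrix α β ℂ} {F' : Matrix α β ℂ} (hF : MHD F F' x)
    (i : α) (j : β) : DifferentiableAt ℝ (fun x' => F x' i j) x :=
  (hF i j).differentiableAt

end MHD

theorem diffAt_det {n : ℕ} {N : ℝ → Matrix (Fin n) (Fin n) ℂ} {x : ℝ}
    (hN : ∀ i j, DifferentiableAt ℝ (fun x' => N x' i j) x) :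
    DifferentiableAt ℝ (fun x' => (N x').det) x := by
  simp only [Matrix.det_apply']
  apply DifferentiableAt.fun_sum
  intro σ _
  exact (DifferentiableAt.fun_finsetProd (fun i _ => hN (σ i) i)).const_mul _

theorem diffAt_inv_entry {n : ℕ} {N : ℝ → Matrix (Fin n) (Fin n) ℂ} {x : ℝ}
    (hN : ∀ i j, DifferentiableAt ℝ (fun x' => N x' i j) x)
    (hdet : (N x).det ≠ 0) (i j : Fin n) :
    DifferentiableAt ℝ (fun x' => (N x')⁻¹ i j) x := by
  have heq : (fun x' => (N x')⁻¹ i j) =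
      fun x' => ((N x').det)⁻¹ * ((N x').updateRow j (Pi.single i 1)).det := by
    funext x'
    rw [Matrix.inv_def, Matrix.smul_apply, Matrix.adjugate_apply, Ring.inverse_eq_inv',
      smul_eq_mul]
  rw [heq]
  apply DifferentiableAt.mul
  · exact (diffAt_det hN).inv hdet
  · apply diffAt_det
    intro a b
    rcases eq_or_ne a j with rfl | h
    · simp only [Matrix.updateRow_self]
      exact differentiableAt_const _
    · simp only [Matrix.updateRow_ne h]
      exact hN a b

theorem MHD.inv {n : ℕ} {N : ℝ → Matrix (Fin n) (Fin n) ℂ} {N' : Matrix (Fin n) (Fin n) ℂ}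
    {x : ℝ} (hNx : MHD N N' x) (hU : ∀ x', IsUnit (N x')) :
    MHD (fun x' => (N x')⁻¹) (-((N x)⁻¹ * N' * (N x)⁻¹)) x := by
  have hdet : ∀ x', (N x').det ≠ 0 := fun x' =>
    ((Matrix.isUnit_iff_isUnit_det _).mp (hU x')).ne_zero
  have hdiff : ∀ i j, DifferentiableAt ℝ (fun x' => (N x')⁻¹ i j) x :=
    fun i j => diffAt_inv_entry (fun a b => (hNx a b).differentiableAt) (hdet x) i j
  set D : Matrix (Fin n) (Fin n) ℂ :=
    Matrix.of (fun i j => deriv (fun x' => (N x')⁻¹ i j) x) with hDdef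
  have hD : MHD (fun x' => (N x')⁻¹) D x := fun i j => (hdiff i j).hasDerivAt
  have hone : (fun x' => N x' * (N x')⁻¹) = fun _ => (1 : Matrix (Fin n) (Fin n) ℂ) :=
    funext fun x' => Matrix.mul_nonsing_inv _ ((Matrix.isUnit_iff_isUnit_det _).mp (hU x'))
  have h1 : MHD (fun x' => N x' * (N x')⁻¹) (N' * (N x)⁻¹ + N x * D) x := hNx.mul hD
  rw [hone] at h1
  have h2 : N' * (N x)⁻¹ + N x * D = 0 := h1.unique (MHD.const 1)
  have h3 : N x * D = -(N' * (N x)⁻¹) := by linear_combination (norm := noncomm_ring) h2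
  have h4 : D = -((N x)⁻¹ * N' * (N x)⁻¹) := by
    calc D = ((N x)⁻¹ * N x) * D := by
            rw [Matrix.nonsing_inv_mul _ ((Matrix.isUnit_iff_isUnit_det _).mp (hU x)), one_mul]
      _ = (N x)⁻¹ * (N x * D) := by rw [Matrix.mul_assoc]
      _ = -((N x)⁻¹ * N' * (N x)⁻¹) := by rw [h3]; noncomm_ring
  exact h4 ▸ hD


theorem expComm {n : ℕ} (P R : Matrix (Fin n) (Fin n) ℂ) (h : Commute R P) :
    Commute R (exp P) := by
  letI : SeminormedRing (Matrix (Fin n) (Fin n) ℂ) := Matrix.linftyOpSemiNormedRing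
  letI : NormedRing (Matrix (Fin n) (Fin n) ℂ) := Matrix.linftyOpNormedRing
  letI : NormedAlgebra ℂ (Matrix (Fin n) (Fin n) ℂ) := Matrix.linftyOpNormedAlgebra
  exact h.exp_right

theorem expMHD {n : ℕ} (P Q : Matrix (Fin n) (Fin n) ℂ) (hPQ : Commute P Q) (x y : ℝ) :
    MHD (fun x' => exp ((x' : ℂ) • P + (y : ℂ) • Q))
      (P * exp ((x : ℂ) • P + (y : ℂ) • Q)) x := by
  letI : SeminormedRing (Matrix (Fin n) (Fin n) ℂ) := Matrix.linftyOpSemiNormedRing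
  letI : NormedRing (Matrix (Fin n) (Fin n) ℂ) := Matrix.linftyOpNormedRing
  letI : NormedAlgebra ℂ (Matrix (Fin n) (Fin n) ℂ) := Matrix.linftyOpNormedAlgebra
  have key : ∀ x' : ℝ, exp ((x' : ℂ) • P + (y : ℂ) • Q)
      = exp ((x' : ℂ) • P) * exp ((y : ℂ) • Q) := fun x' =>
    NormedSpace.exp_add_of_commute_of_mem_ball (𝕂 := ℂ) ((hPQ.smul_left _).smul_right _)
      ((expSeries_radius_eq_top ℂ (Matrix (Fin n) (Fin n) ℂ)).symm ▸ edist_lt_top _ _) ((expSeries_radius_eq_top ℂ (Matrix (Fin n) (Fin n) ℂ)).symm ▸ edist_lt_top _ _)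
  have hof : HasDerivAt (fun x' : ℝ => (x' : ℂ)) 1 x := by
    exact Complex.ofRealCLM.hasDerivAt (x := x)
  have h2 : HasDerivAt (fun x' : ℝ => exp ((x' : ℂ) • P))
      (P * exp ((x : ℂ) • P)) x := by
    have := HasDerivAt.scomp x (hasDerivAt_exp_smul_const' P ((x : ℝ) : ℂ)) hof
    rw [one_smul] at this
    exact this
  have h3 : HasDerivAt (fun x' : ℝ => exp ((x' : ℂ) • P + (y : ℂ) • Q))
      (P * exp ((x : ℂ) • P + (y : ℂ) • Q)) x := by
    simp only [key, ← Matrix.mul_assoc]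
    exact h2.mul_const _
  intro i j
  let lm : Matrix (Fin n) (Fin n) ℂ →ₗ[ℂ] ℂ :=
    { toFun := fun M => M i j
      map_add' := fun a b => rfl
      map_smul' := fun c a => rfl }
  have := ((LinearMap.toContinuousLinearMap lm).restrictScalars ℝ).hasFDerivAt.comp_hasDerivAt x h3
  exact this

theorem expMHD2 {n : ℕ} (P Q : Matrix (Fin n) (Fin n) ℂ) (hPQ : Commute P Q) (x y : ℝ) :
    MHD (fun t' => exp ((x : ℂ) • P + (t' : ℂ) • Q))
      (Q * exp ((x : ℂ) • P + (y : ℂ) • Q)) y := by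
  letI : SeminormedRing (Matrix (Fin n) (Fin n) ℂ) := Matrix.linftyOpSemiNormedRing
  letI : NormedRing (Matrix (Fin n) (Fin n) ℂ) := Matrix.linftyOpNormedRing
  letI : NormedAlgebra ℂ (Matrix (Fin n) (Fin n) ℂ) := Matrix.linftyOpNormedAlgebra
  have key : ∀ t' : ℝ, exp ((x : ℂ) • P + (t' : ℂ) • Q)
      = exp ((x : ℂ) • P) * exp ((t' : ℂ) • Q) := fun t' =>
    NormedSpace.exp_add_of_commute_of_mem_ball (𝕂 := ℂ) ((hPQ.smul_left _).smul_right _)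
      ((expSeries_radius_eq_top ℂ (Matrix (Fin n) (Fin n) ℂ)).symm ▸ edist_lt_top _ _) ((expSeries_radius_eq_top ℂ (Matrix (Fin n) (Fin n) ℂ)).symm ▸ edist_lt_top _ _)
  have hof : HasDerivAt (fun t' : ℝ => (t' : ℂ)) 1 y := by
    exact Complex.ofRealCLM.hasDerivAt (x := y)
  have h2 : HasDerivAt (fun t' : ℝ => exp ((t' : ℂ) • Q))
      (Q * exp ((y : ℂ) • Q)) y := by
    have := HasDerivAt.scomp y (hasDerivAt_exp_smul_const' Q ((y : ℝ) : ℂ)) hof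
    rw [one_smul] at this
    exact this
  have hcomm : Q * exp ((x : ℂ) • P) = exp ((x : ℂ) • P) * Q :=
    ((hPQ.symm.smul_right ((x : ℂ))).exp_right).eq
  have h3 : HasDerivAt (fun t' : ℝ => exp ((x : ℂ) • P + (t' : ℂ) • Q))
      (Q * exp ((x : ℂ) • P + (y : ℂ) • Q)) y := by
    have h4 := h2.const_mul (exp ((x : ℂ) • P))
    simp only [key]
    rw [← Matrix.mul_assoc, hcomm, Matrix.mul_assoc]
    exact h4
  intro i j
  let lm : Matrix (Fin n) (Fin n) ℂ →ₗ[ℂ] ℂ :=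
    { toFun := fun M => M i j
      map_add' := fun a b => rfl
      map_smul' := fun c a => rfl }
  have := ((LinearMap.toContinuousLinearMap lm).restrictScalars ℝ).hasFDerivAt.comp_hasDerivAt
    y h3
  exact this
theorem MHD.pd1_eq {α β : Type*} {F : ℝ → ℝ → Matrix α β ℂ} {F' : Matrix α β ℂ} {x t : ℝ}
    (h : MHD (fun x' => F x' t) F' x) : pd1 F x t = F' :=
  Matrix.ext fun i j => (h i j).deriv

theorem MHD.pd2_eq {α β : Type*} {F : ℝ → ℝ → Matrix α β ℂ} {F' : Matrix α β ℂ} {x t : ℝ}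
    (h : MHD (fun t' => F x t') F' t) : pd2 F x t = F' :=
  Matrix.ext fun i j => (h i j).deriv

theorem heart {n₁ n₂ m₁ m₂ : ℕ}
    (S : Matrix (Fin n₁) (Fin n₁) ℂ) (Sb : Matrix (Fin n₂) (Fin n₂) ℂ)
    (U : Matrix (Fin m₁) (Fin n₂) ℂ) (Ub : Matrix (Fin m₂) (Fin n₁) ℂ)
    (V : Matrix (Fin n₁) (Fin m₁) ℂ) (Vb : Matrix (Fin n₂) (Fin m₂) ℂ)
    (K : Matrix (Fin n₁) (Fin n₂) ℂ) (Kb : Matrix (Fin n₂) (Fin n₁) ℂ)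
    (a : Matrix (Fin n₁) (Fin n₁) ℂ) (b : Matrix (Fin n₂) (Fin n₂) ℂ)
    (g : Matrix (Fin n₂) (Fin n₂) ℂ) (h : Matrix (Fin n₁) (Fin n₁) ℂ)
    (hSyl : S * K + K * Sb = V * U) (hSylb : Sb * Kb + Kb * S = Vb * Ub)
    (haS : a * S = S * a) (hbS : b * Sb = Sb * b)
    (hg1 : (1 - Kb * a * K * b) * g = 1) (hg2 : g * (1 - Kb * a * K * b) = 1)
    (hh1 : (1 - K * b * Kb * a) * h = 1) (hh2 : h * (1 - K * b * Kb * a) = 1) :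
    Sb * b * g * Kb * a * V + b * g * Kb * a * V * U * b * g * Kb * a * V
        + b * g * Kb * S * a * V
      = b * g * Vb * Ub * a * h * V := by
  -- basic identities
  have hI1base : g * Kb * a = Kb * a * h := by
    calc g * Kb * a
        = g * Kb * a * ((1 - K * b * Kb * a) * h) := by rw [hh1, Matrix.mul_one]
      _ = (g * (1 - Kb * a * K * b)) * (Kb * a * h) := by
          simp only [Matrix.mul_sub, Matrix.sub_mul, Matrix.mul_one, Matrix.one_mul,
            Matrix.mul_assoc]
      _ = Kb * a * h := by rw [hg2, Matrix.one_mul]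
  have hgexp : g = 1 + Kb * a * h * (K * b) := by
    have h5 : g - g * (Kb * a * K * b) = 1 := by
      have := hg2; rwa [Matrix.mul_sub, Matrix.mul_one] at this
    have h6 : g = 1 + g * (Kb * a * K * b) := by rw [← h5]; abel
    calc g = 1 + g * (Kb * a * K * b) := h6
      _ = 1 + (g * Kb * a) * (K * b) := by simp only [Matrix.mul_assoc]
      _ = 1 + Kb * a * h * (K * b) := by rw [hI1base]
  have hEbase : K * b * Kb * a * h = h - 1 := by
    have h7 : h - K * b * Kb * a * h = 1 := by
      have := hh1; rwa [Matrix.sub_mul, Matrix.one_mul] at this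
    rw [← h7]; abel
  -- right-associated ∀-helpers
  have hSa : ∀ {p : Type} (Z : Matrix (Fin n₁) p ℂ), S * (a * Z) = a * (S * Z) := by
    intro p Z; rw [← Matrix.mul_assoc, ← haS, Matrix.mul_assoc]
  have hbS' : ∀ {p : Type} (Z : Matrix (Fin n₂) p ℂ), b * (Sb * Z) = Sb * (b * Z) := by
    intro p Z; rw [← Matrix.mul_assoc, hbS, Matrix.mul_assoc]
  have hI1 : ∀ {p : Type} (Z : Matrix (Fin n₁) p ℂ),
      g * (Kb * (a * Z)) = Kb * (a * (h * Z)) := by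
    intro p Z
    calc g * (Kb * (a * Z)) = (g * Kb * a) * Z := by simp only [Matrix.mul_assoc]
      _ = (Kb * a * h) * Z := by rw [hI1base]
      _ = Kb * (a * (h * Z)) := by simp only [Matrix.mul_assoc]
  have hKSb : ∀ {p : Type} (Z : Matrix (Fin n₂) p ℂ),
      K * (Sb * Z) = V * (U * Z) - S * (K * Z) := by
    intro p Z
    have h8 : K * Sb = V * U - S * K := by rw [← hSyl]; abel
    calc K * (Sb * Z) = (K * Sb) * Z := by rw [Matrix.mul_assoc]
      _ = (V * U - S * K) * Z := by rw [h8]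
      _ = V * (U * Z) - S * (K * Z) := by
          simp only [Matrix.sub_mul, Matrix.mul_assoc]
  have hVbUb : ∀ {p : Type} (Z : Matrix (Fin n₁) p ℂ),
      Vb * (Ub * Z) = Sb * (Kb * Z) + Kb * (S * Z) := by
    intro p Z
    calc Vb * (Ub * Z) = (Vb * Ub) * Z := by rw [Matrix.mul_assoc]
      _ = (Sb * Kb + Kb * S) * Z := by rw [hSylb]
      _ = Sb * (Kb * Z) + Kb * (S * Z) := by simp only [Matrix.add_mul, Matrix.mul_assoc]
  have hE' : ∀ {p : Type} (Z : Matrix (Fin n₁) p ℂ),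
      K * (b * (Kb * (a * (h * Z)))) = h * Z - Z := by
    intro p Z
    calc K * (b * (Kb * (a * (h * Z)))) = (K * b * Kb * a * h) * Z := by
          simp only [Matrix.mul_assoc]
      _ = (h - 1) * Z := by rw [hEbase]
      _ = h * Z - Z := by simp only [Matrix.sub_mul, Matrix.one_mul]
  have hgSb : ∀ {p : Type} (Z : Matrix (Fin n₂) p ℂ),
      g * (Sb * Z) = Sb * Z + Kb * (a * (h * (K * (b * (Sb * Z))))) := by
    intro p Z
    calc g * (Sb * Z) = (1 + Kb * a * h * (K * b)) * (Sb * Z) := by rw [← hgexp]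
      _ = Sb * Z + Kb * (a * (h * (K * (b * (Sb * Z))))) := by
          simp only [Matrix.add_mul, Matrix.one_mul, Matrix.mul_assoc]
  -- normalize the goal to right-associated form
  simp only [Matrix.mul_assoc]
  rw [hSa, hVbUb, Matrix.mul_add, Matrix.mul_add]
  rw [hgSb, hSa]
  simp only [hI1]
  rw [hbS']
  rw [Matrix.mul_add b]
  rw [hbS', hKSb]
  simp only [Matrix.mul_sub, Matrix.mul_add, hE']
  abel


set_option maxHeartbeats 1000000 in
theorem master {m₁ m₂ n₁ n₂ : ℕ}
    (S : Matrix (Fin n₁) (Fin n₁) ℂ) (Sb : Matrix (Fin n₂) (Fin n₂) ℂ)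
    (U : Matrix (Fin m₁) (Fin n₂) ℂ) (Ub : Matrix (Fin m₂) (Fin n₁) ℂ)
    (V : Matrix (Fin n₁) (Fin m₁) ℂ) (Vb : Matrix (Fin n₂) (Fin m₂) ℂ)
    (K : Matrix (Fin n₁) (Fin n₂) ℂ) (Kb : Matrix (Fin n₂) (Fin n₁) ℂ)
    (hSyl : S * K + K * Sb = V * U) (hSylb : Sb * Kb + Kb * S = Vb * Ub)
    (ε : ℂ)
    (A : ℝ → ℝ → Matrix (Fin n₁) (Fin n₁) ℂ) (B : ℝ → ℝ → Matrix (Fin n₂) (Fin n₂) ℂ)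
    (hA1 : ∀ x t : ℝ, MHD (fun x' => A x' t) (-(S * A x t)) x)
    (hA2 : ∀ x t : ℝ, MHD (fun t' => A x t') ((-ε) • (S ^ 2 * A x t)) t)
    (hAS : ∀ x t : ℝ, A x t * S = S * A x t)
    (hB1 : ∀ x t : ℝ, MHD (fun x' => B x' t) (-(Sb * B x t)) x)
    (hB2 : ∀ x t : ℝ, MHD (fun t' => B x t') (ε • (Sb ^ 2 * B x t)) t)
    (hBS : ∀ x t : ℝ, B x t * Sb = Sb * B x t)
    (hiM : ∀ x t : ℝ, IsUnit (1 - K * B x t * Kb * A x t))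
    (hiN : ∀ x t : ℝ, IsUnit (1 - Kb * A x t * K * B x t)) :
    ∀ x t : ℝ,
      pd2 (fun x t => U * B x t * (1 - Kb * A x t * K * B x t)⁻¹ * Vb) x t
        = ε • (pd1 (pd1 (fun x t => U * B x t * (1 - Kb * A x t * K * B x t)⁻¹ * Vb)) x t
            - (2 : ℂ) • ((U * B x t * (1 - Kb * A x t * K * B x t)⁻¹ * Vb) * (Ub * A x t * (1 - K * B x t * Kb * A x t)⁻¹ * V) * (U * B x t * (1 - Kb * A x t * K * B x t)⁻¹ * Vb))) := by
  -- right-associated helpers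
  have hSa : ∀ (x t : ℝ) {p : Type} (Z : Matrix (Fin n₁) p ℂ),
      S * (A x t * Z) = A x t * (S * Z) := by
    intro x t p Z; rw [← Matrix.mul_assoc, ← hAS, Matrix.mul_assoc]
  have hSbB : ∀ (x t : ℝ) {p : Type} (Z : Matrix (Fin n₂) p ℂ),
      Sb * (B x t * Z) = B x t * (Sb * Z) := by
    intro x t p Z; rw [← Matrix.mul_assoc, ← hBS, Matrix.mul_assoc]
  have hKSb : ∀ {p : Type} (Z : Matrix (Fin n₂) p ℂ),
      K * (Sb * Z) = V * (U * Z) - S * (K * Z) := by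
    intro p Z
    have h8 : K * Sb = V * U - S * K := by rw [← hSyl]; abel
    rw [← Matrix.mul_assoc, h8]; simp only [Matrix.sub_mul, Matrix.mul_assoc]
  -- x-derivative of N
  have hNx : ∀ x t : ℝ, MHD (fun x' => 1 - Kb * A x' t * K * B x' t)
      (Kb * A x t * V * U * B x t) x := fun x t =>
    ((MHD.const 1).sub (((MHD.const_mul Kb (hA1 x t)).mul_const K).mul (hB1 x t))).congr_deriv
      (by
        have h := hKSb (B x t)
        simp only [Matrix.mul_neg, Matrix.neg_mul, zero_sub, neg_add_rev, neg_neg,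
          Matrix.mul_assoc]
        rw [hKSb]
        simp only [Matrix.mul_sub, hSa]
        abel)
  -- x-derivative of G = N⁻¹
  have hGx : ∀ x t : ℝ, MHD (fun x' => (1 - Kb * A x' t * K * B x' t)⁻¹)
      (-((1 - Kb * A x t * K * B x t)⁻¹ * (Kb * A x t * V * U * B x t) * (1 - Kb * A x t * K * B x t)⁻¹)) x := fun x t =>
    (hNx x t).inv (fun x' => hiN x' t)
  -- t-derivative of N
  have hNt : ∀ x t : ℝ, MHD (fun t' => 1 - Kb * A x t' * K * B x t')
      (ε • (Kb * (S * A x t) * V * U * B x t - Kb * A x t * V * U * (Sb * B x t))) t := fun x t =>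
    ((MHD.const 1).sub (((MHD.const_mul Kb (hA2 x t)).mul_const K).mul (hB2 x t))).congr_deriv
      (by
        have core : Kb * (S ^ 2 * A x t) * K * B x t - Kb * A x t * K * (Sb ^ 2 * B x t)
            = Kb * (S * A x t) * V * U * B x t - Kb * A x t * V * U * (Sb * B x t) := by
          simp only [pow_two, Matrix.mul_assoc, hKSb]
          simp only [Matrix.mul_sub, ← hSa]
          abel
        rw [← core]
        simp only [Matrix.mul_smul, Matrix.smul_mul, Matrix.mul_neg, Matrix.neg_mul,
          neg_smul, smul_neg, smul_sub, zero_sub, neg_add_rev, neg_neg]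
        abel)
  have hGt : ∀ x t : ℝ, MHD (fun t' => (1 - Kb * A x t' * K * B x t')⁻¹)
      (-((1 - Kb * A x t * K * B x t)⁻¹ * (ε • (Kb * (S * A x t) * V * U * B x t - Kb * A x t * V * U * (Sb * B x t))) * (1 - Kb * A x t * K * B x t)⁻¹)) t := fun x t =>
    (hNt x t).inv (fun t' => hiN x t')
  -- t-derivative of q
  have hqt : ∀ x t : ℝ, MHD (fun t' => U * B x t' * (1 - Kb * A x t' * K * B x t')⁻¹ * Vb)
      (ε • (U * Sb * (Sb * B x t) * (1 - Kb * A x t * K * B x t)⁻¹ * Vb - U * B x t * (1 - Kb * A x t * K * B x t)⁻¹ * (Kb * (S * A x t) * V * U * B x t) * (1 - Kb * A x t * K * B x t)⁻¹ * Vb + U * B x t * (1 - Kb * A x t * K * B x t)⁻¹ * (Kb * A x t * V * U * (Sb * B x t)) * (1 - Kb * A x t * K * B x t)⁻¹ * Vb)) t := fun x t =>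
    (((MHD.const_mul U (hB2 x t)).mul (hGt x t)).mul_const Vb).congr_deriv
      (by
        trans ε • ((U * (Sb ^ 2 * B x t) * (1 - Kb * A x t * K * B x t)⁻¹
            + U * B x t * (-((1 - Kb * A x t * K * B x t)⁻¹
              * (Kb * (S * A x t) * V * U * B x t - Kb * A x t * V * U * (Sb * B x t))
              * (1 - Kb * A x t * K * B x t)⁻¹))) * Vb)
        · simp only [Matrix.mul_smul, Matrix.smul_mul, Matrix.mul_neg, Matrix.neg_mul,
            neg_smul, smul_neg, neg_neg, ← smul_add]
          rw [← smul_neg, ← smul_add, ← Matrix.smul_mul]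
        · congr 1
          simp only [pow_two, Matrix.mul_sub, Matrix.sub_mul, Matrix.mul_neg, Matrix.neg_mul,
            Matrix.add_mul, Matrix.mul_assoc]
          abel)
  -- x-derivative of q
  have hq1 : ∀ x t : ℝ, MHD (fun x' => U * B x' t * (1 - Kb * A x' t * K * B x' t)⁻¹ * Vb)
      (-(U * Sb * B x t * (1 - Kb * A x t * K * B x t)⁻¹ * Vb) - U * B x t * (1 - Kb * A x t * K * B x t)⁻¹ * (Kb * A x t * V * U * B x t) * (1 - Kb * A x t * K * B x t)⁻¹ * Vb) x := fun x t =>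
    (((MHD.const_mul U (hB1 x t)).mul (hGx x t)).mul_const Vb).congr_deriv
      (by
        simp only [Matrix.mul_neg, Matrix.neg_mul, Matrix.add_mul, Matrix.mul_assoc,
          sub_eq_add_neg]
        try abel)
  have hpd1q : pd1 (fun x t => U * B x t * (1 - Kb * A x t * K * B x t)⁻¹ * Vb)
      = fun x t => -(U * Sb * B x t * (1 - Kb * A x t * K * B x t)⁻¹ * Vb) - U * B x t * (1 - Kb * A x t * K * B x t)⁻¹ * (Kb * A x t * V * U * B x t) * (1 - Kb * A x t * K * B x t)⁻¹ * Vb := by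
    funext x t
    exact (hq1 x t).pd1_eq
  -- second x-derivative
  have hq2 : ∀ x t : ℝ, MHD (fun x' => -(U * Sb * B x' t * (1 - Kb * A x' t * K * B x' t)⁻¹ * Vb)
        - U * B x' t * (1 - Kb * A x' t * K * B x' t)⁻¹
          * (Kb * A x' t * V * U * B x' t) * (1 - Kb * A x' t * K * B x' t)⁻¹ * Vb)
      (U * Sb * (Sb * B x t) * (1 - Kb * A x t * K * B x t)⁻¹ * Vb + (U * Sb * B x t * (1 - Kb * A x t * K * B x t)⁻¹ * (Kb * A x t * V * U * B x t) * (1 - Kb * A x t * K * B x t)⁻¹ * Vb + U * Sb * B x t * (1 - Kb * A x t * K * B x t)⁻¹ * (Kb * A x t * V * U * B x t) * (1 - Kb * A x t * K * B x t)⁻¹ * Vb) + (U * B x t * (1 - Kb * A x t * K * B x t)⁻¹ * (Kb * A x t * V * U * B x t) * (1 - Kb * A x t * K * B x t)⁻¹ * (Kb * A x t * V * U * B x t) * (1 - Kb * A x t * K * B x t)⁻¹ * Vb + U * B x t * (1 - Kb * A x t * K * B x t)⁻¹ * (Kb * A x t * V * U * B x t) * (1 - Kb * A x t * K * B x t)⁻¹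 * (Kb * A x t * V * U * B x t) * (1 - Kb * A x t * K * B x t)⁻¹ * Vb) + U * B x t * (1 - Kb * A x t * K * B x t)⁻¹ * (Kb * (S * A x t) * V * U * B x t) * (1 - Kb * A x t * K * B x t)⁻¹ * Vb + U * B x t * (1 - Kb * A x t * K * B x t)⁻¹ * (Kb * A x t * V * U * (Sb * B x t)) * (1 - Kb * A x t * K * B x t)⁻¹ * Vb) x := fun x t =>
    (((((MHD.const_mul (U * Sb) (hB1 x t)).mul (hGx x t)).mul_const Vb).neg).sub
      (((((MHD.const_mul U (hB1 x t)).mul (hGx x t)).mul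
          ((((MHD.const_mul Kb (hA1 x t)).mul_const V).mul_const U).mul (hB1 x t))).mul
            (hGx x t)).mul_const Vb)).congr_deriv
      (by
        simp only [Matrix.mul_neg, Matrix.neg_mul, neg_neg, Matrix.add_mul, Matrix.mul_add,
          Matrix.sub_mul, Matrix.mul_sub, sub_eq_add_neg, neg_add_rev, Matrix.mul_assoc]
        abel)
  -- now the main computation
  intro x t
  rw [(hqt x t).pd2_eq, hpd1q, (hq2 x t).pd1_eq]
  -- unit facts
  have hg1 : (1 - Kb * A x t * K * B x t) * (1 - Kb * A x t * K * B x t)⁻¹ = 1 :=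
    Matrix.mul_nonsing_inv _ ((Matrix.isUnit_iff_isUnit_det _).mp (hiN x t))
  have hg2 : (1 - Kb * A x t * K * B x t)⁻¹ * (1 - Kb * A x t * K * B x t) = 1 :=
    Matrix.nonsing_inv_mul _ ((Matrix.isUnit_iff_isUnit_det _).mp (hiN x t))
  have hh1 : (1 - K * B x t * Kb * A x t) * (1 - K * B x t * Kb * A x t)⁻¹ = 1 :=
    Matrix.mul_nonsing_inv _ ((Matrix.isUnit_iff_isUnit_det _).mp (hiM x t))
  have hh2 : (1 - K * B x t * Kb * A x t)⁻¹ * (1 - K * B x t * Kb * A x t) = 1 :=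
    Matrix.nonsing_inv_mul _ ((Matrix.isUnit_iff_isUnit_det _).mp (hiM x t))
  have hH := heart S Sb U Ub V Vb K Kb (A x t) (B x t) ((1 - Kb * A x t * K * B x t)⁻¹) ((1 - K * B x t * Kb * A x t)⁻¹)
    hSyl hSylb (hAS x t) (hBS x t) hg1 hg2 hh1 hh2
  have hexp : (U * Sb * (Sb * B x t) * (1 - Kb * A x t * K * B x t)⁻¹ * Vb + (U * Sb * B x t * (1 - Kb * A x t * K * B x t)⁻¹ * (Kb * A x t * V * U * B x t) * (1 - Kb * A x t * K * B x t)⁻¹ * Vb + U * Sb * B x t * (1 - Kb * A x t * K * B x t)⁻¹ * (Kb * A x t * V * U * B x t) * (1 - Kb * A x t * K * B x t)⁻¹ * Vb) + (U * B x t * (1 - Kb * A x t * K * B x t)⁻¹ * (Kb * A x t * V * U * B x t) * (1 - Kb * A x t * K * B x t)⁻¹ * (Kb * A x t * V * U * B x t) * (1 - Kb * A x t * K * B x t)⁻¹ * Vb + U * B x t * (1 - Kb * A x t * K * B x t)⁻¹ * (Kb * A x t * V * U * B x t) * (1 - Kb * A x t * K * B x t)⁻¹ * (Kb * A x t * V *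 U * B x t) * (1 - Kb * A x t * K * B x t)⁻¹ * Vb) + U * B x t * (1 - Kb * A x t * K * B x t)⁻¹ * (Kb * (S * A x t) * V * U * B x t) * (1 - Kb * A x t * K * B x t)⁻¹ * Vb + U * B x t * (1 - Kb * A x t * K * B x t)⁻¹ * (Kb * A x t * V * U * (Sb * B x t)) * (1 - Kb * A x t * K * B x t)⁻¹ * Vb)
        - (2 : ℂ) • ((U * B x t * (1 - Kb * A x t * K * B x t)⁻¹ * Vb) * (Ub * A x t * (1 - K * B x t * Kb * A x t)⁻¹ * V) * (U * B x t * (1 - Kb * A x t * K * B x t)⁻¹ * Vb))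
      = (U * Sb * (Sb * B x t) * (1 - Kb * A x t * K * B x t)⁻¹ * Vb - U * B x t * (1 - Kb * A x t * K * B x t)⁻¹ * (Kb * (S * A x t) * V * U * B x t) * (1 - Kb * A x t * K * B x t)⁻¹ * Vb + U * B x t * (1 - Kb * A x t * K * B x t)⁻¹ * (Kb * A x t * V * U * (Sb * B x t)) * (1 - Kb * A x t * K * B x t)⁻¹ * Vb)
        + ((U * (Sb * B x t * (1 - Kb * A x t * K * B x t)⁻¹ * Kb * A x t * V + B x t * (1 - Kb * A x t * K * B x t)⁻¹ * Kb * A x t * V * U * B x t * (1 - Kb * A x t * K * B x t)⁻¹ * Kb * A x t * V + B x t * (1 - Kb * A x t * K * B x t)⁻¹ * Kb * S * A x t * V) * (U * B x t * (1 - Kb * A x t * K * B x t)⁻¹ * Vb)) + (U * (Sb * B x t * (1 - Kb * A x t * K * B x t)⁻¹ * Kb * A x t * V + B x t * (1 - Kb * A x t * K * B x t)⁻¹ * Kb * A x t * V * U * B x t * (1 - Kb * A x t * K * B x t)⁻¹ * Kb * A x t * V + B x t * (1 - Kb * A x t * K * B x t)⁻¹ * Kb * S * A x t * V) * (U * B x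 t * (1 - Kb * A x t * K * B x t)⁻¹ * Vb)))
        - ((U * (B x t * (1 - Kb * A x t * K * B x t)⁻¹ * Vb * Ub * A x t * (1 - K * B x t * Kb * A x t)⁻¹ * V) * (U * B x t * (1 - Kb * A x t * K * B x t)⁻¹ * Vb)) + (U * (B x t * (1 - Kb * A x t * K * B x t)⁻¹ * Vb * Ub * A x t * (1 - K * B x t * Kb * A x t)⁻¹ * V) * (U * B x t * (1 - Kb * A x t * K * B x t)⁻¹ * Vb))) := by
    simp only [two_smul, Matrix.mul_add, Matrix.add_mul, Matrix.mul_sub, Matrix.sub_mul,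
      Matrix.mul_assoc]
    abel
  rw [hexp, hH]
  congr 1
  abel

set_option maxHeartbeats 1000000 in
theorem statement2 (m₁ m₂ n₁ n₂ : ℕ)
    (hm₁ : 0 < m₁) (hm₂ : 0 < m₂) (hn₁ : 0 < n₁) (hn₂ : 0 < n₂)
    (S : Matrix (Fin n₁) (Fin n₁) ℂ) (Sb : Matrix (Fin n₂) (Fin n₂) ℂ)
    (U : Matrix (Fin m₁) (Fin n₂) ℂ) (Ub : Matrix (Fin m₂) (Fin n₁) ℂ)
    (V : Matrix (Fin n₁) (Fin m₁) ℂ) (Vb : Matrix (Fin n₂) (Fin m₂) ℂ)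
    (K : Matrix (Fin n₁) (Fin n₂) ℂ) (Kb : Matrix (Fin n₂) (Fin n₁) ℂ)
    (hSyl : S * K + K * Sb = V * U) (hSylb : Sb * Kb + Kb * S = Vb * Ub)
    (Ξ : ℝ → ℝ → Matrix (Fin n₁) (Fin n₁) ℂ)
    (hΞ : Ξ = fun (x t : ℝ) => NormedSpace.exp (-((x : ℂ) • S + (t : ℂ) • S ^ 2)))
    (Ξb : ℝ → ℝ → Matrix (Fin n₂) (Fin n₂) ℂ)
    (hΞb : Ξb = fun (x t : ℝ) => NormedSpace.exp (-((x : ℂ) • Sb) + (t : ℂ) • Sb ^ 2))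
    (hinv₁ : ∀ x t : ℝ, IsUnit (1 - K * Ξb x t * Kb * Ξ x t))
    (hinv₂ : ∀ x t : ℝ, IsUnit (1 - Kb * Ξ x t * K * Ξb x t))
    (q : ℝ → ℝ → Matrix (Fin m₁) (Fin m₂) ℂ)
    (hq : q = fun x t => U * Ξb x t * (1 - Kb * Ξ x t * K * Ξb x t)⁻¹ * Vb)
    (qb : ℝ → ℝ → Matrix (Fin m₂) (Fin m₁) ℂ)
    (hqb : qb = fun x t => Ub * Ξ x t * (1 - K * Ξb x t * Kb * Ξ x t)⁻¹ * V) :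
    ∀ x t : ℝ,
      pd2 q x t = pd1 (pd1 q) x t - (2 : ℂ) • (q x t * qb x t * q x t) ∧
      pd2 qb x t = -(pd1 (pd1 qb) x t) + (2 : ℂ) • (qb x t * q x t * qb x t) := by
  subst hq hqb hΞ hΞb
  -- rewrite the exponents in scalar-multiple form
  have eΞ : (fun (x t : ℝ) => NormedSpace.exp (-((x : ℂ) • S + (t : ℂ) • S ^ 2)))
      = fun (x t : ℝ) => exp ((x : ℂ) • (-S) + (t : ℂ) • (-(S ^ 2))) := by
    funext x t
    congr 1
    module
  have eΞb : (fun (x t : ℝ) => NormedSpace.exp (-((x : ℂ) • Sb) + (t : ℂ) • Sb ^ 2))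
      = fun (x t : ℝ) => exp ((x : ℂ) • (-Sb) + (t : ℂ) • (Sb ^ 2)) := by
    funext x t
    congr 1
    module
  rw [eΞ, eΞb] at hinv₁ hinv₂ ⊢
  set Ξf : ℝ → ℝ → Matrix (Fin n₁) (Fin n₁) ℂ :=
    fun (x t : ℝ) => exp ((x : ℂ) • (-S) + (t : ℂ) • (-(S ^ 2))) with hΞf
  set Ξbf : ℝ → ℝ → Matrix (Fin n₂) (Fin n₂) ℂ :=
    fun (x t : ℝ) => exp ((x : ℂ) • (-Sb) + (t : ℂ) • (Sb ^ 2)) with hΞbf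
  -- commutation facts
  have cS : Commute (-S) (-(S ^ 2)) := (((Commute.refl S).pow_right 2).neg_left).neg_right
  have cSb : Commute (-Sb) (Sb ^ 2) := ((Commute.refl Sb).pow_right 2).neg_left
  -- derivative facts for Ξ
  have hΞ1 : ∀ x t : ℝ, MHD (fun x' => Ξf x' t) (-(S * Ξf x t)) x := fun x t =>
    (expMHD (-S) (-(S ^ 2)) cS x t).congr_deriv (by rw [Matrix.neg_mul])
  have hΞ2 : ∀ x t : ℝ, MHD (fun t' => Ξf x t') (-(S ^ 2 * Ξf x t)) t := fun x t =>
    (expMHD2 (-S) (-(S ^ 2)) cS x t).congr_deriv (by rw [Matrix.neg_mul])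
  have hΞS : ∀ x t : ℝ, Ξf x t * S = S * Ξf x t := fun x t => by
    have hc : Commute S ((x : ℂ) • (-S) + (t : ℂ) • (-(S ^ 2))) :=
      (((Commute.refl S).neg_right.smul_right _)).add_right
        ((((Commute.refl S).pow_right 2).neg_right).smul_right _)
    exact ((expComm _ S hc).eq).symm
  -- derivative facts for Ξb
  have hΞb1 : ∀ x t : ℝ, MHD (fun x' => Ξbf x' t) (-(Sb * Ξbf x t)) x := fun x t =>
    (expMHD (-Sb) (Sb ^ 2) cSb x t).congr_deriv (by rw [Matrix.neg_mul])
  have hΞb2 : ∀ x t : ℝ, MHD (fun t' => Ξbf x t') (Sb ^ 2 * Ξbf x t) t := fun x t =>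
    expMHD2 (-Sb) (Sb ^ 2) cSb x t
  have hΞbS : ∀ x t : ℝ, Ξbf x t * Sb = Sb * Ξbf x t := fun x t => by
    have hc : Commute Sb ((x : ℂ) • (-Sb) + (t : ℂ) • (Sb ^ 2)) :=
      (((Commute.refl Sb).neg_right.smul_right _)).add_right
        ((((Commute.refl Sb).pow_right 2)).smul_right _)
    exact ((expComm _ Sb hc).eq).symm
  intro x t
  constructor
  · have h1 := master S Sb U Ub V Vb K Kb hSyl hSylb 1 Ξf Ξbf
      hΞ1
      (fun x t => (hΞ2 x t).congr_deriv (by module))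
      hΞS
      hΞb1
      (fun x t => (hΞb2 x t).congr_deriv (by module))
      hΞbS
      hinv₁ hinv₂ x t
    rw [one_smul] at h1
    exact h1
  · have h2 := master Sb S Ub U Vb V Kb K hSylb hSyl (-1) Ξbf Ξf
      hΞb1
      (fun x t => (hΞb2 x t).congr_deriv (by module))
      hΞbS
      hΞ1
      (fun x t => (hΞ2 x t).congr_deriv (by module))
      hΞS
      hinv₂ hinv₁ x t
    have key : ∀ (P Y : Matrix (Fin m₂) (Fin m₁) ℂ),
        (-1 : ℂ) • (P - (2 : ℂ) • Y) = -P + (2 : ℂ) • Y := by intro P Y; module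
    rw [key] at h2
    exact h2
end
end

section
/- Let m₁, m₂ be positive integers and let q, q̄, p be smooth matrix-valued functions on ℝ² (variables (x,t)) of sizes m₁×m₂, m₂×m₁, m₁×m₁, satisfying the matrix NLS system q_t = q_{xx} − 2 q q̄ q, q̄_t = −q̄_{xx} + 2 q̄ q q̄, together with p_x = −q q̄. For any constant ν ∈ ℂ define the block matrices L = [[ν I_{m₁}, q], [q̄, 0]] and M = [[ν² I_{m₁} + q q̄ + 2 p_x, ν q + q_x], [ν q̄ − q̄_x, q̄ q]]. Then the zero-curvature equation L_t − M_x = [M, L] holds identically, i.e., L and M constitute a Lax pair for the matrix NLS system. -/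
open Matrix

noncomputable section

namespace NLSaux
variable {α β γ δ : Type*}
def D1 (M : ℝ → ℝ → Matrix α β ℂ) : Prop :=
  ∀ (t : ℝ) (i : α) (j : β), Differentiable ℝ (fun x => M x t i j)

lemma pd1_const (C : Matrix α β ℂ) (x t : ℝ) : pd1 (fun _ _ => C) x t = 0 := by
  ext i j; simp [pd1]

lemma pd2_const (C : Matrix α β ℂ) (x t : ℝ) : pd2 (fun _ _ => C) x t = 0 := by
  ext i j; simp [pd2]

lemma pd1_add (A B : ℝ → ℝ → Matrix α β ℂ) (hA : D1 A) (hB : D1 B) (x t : ℝ) :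
    pd1 (fun x t => A x t + B x t) x t = pd1 A x t + pd1 B x t := by
  ext i j
  simp only [pd1, of_apply, Matrix.add_apply]
  exact deriv_add (hA t i j x) (hB t i j x)

lemma pd1_sub (A B : ℝ → ℝ → Matrix α β ℂ) (hA : D1 A) (hB : D1 B) (x t : ℝ) :
    pd1 (fun x t => A x t - B x t) x t = pd1 A x t - pd1 B x t := by
  ext i j
  simp only [pd1, of_apply, Matrix.sub_apply]
  exact deriv_sub (hA t i j x) (hB t i j x)

lemma pd1_smul (c : ℂ) (A : ℝ → ℝ → Matrix α β ℂ) (x t : ℝ) :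
    pd1 (fun x t => c • A x t) x t = c • pd1 A x t := by
  ext i j
  simp only [pd1, of_apply, Matrix.smul_apply, smul_eq_mul]
  exact deriv_const_mul_field c

lemma pd1_mul [Fintype β] (A : ℝ → ℝ → Matrix α β ℂ) (B : ℝ → ℝ → Matrix β γ ℂ)
    (hA : D1 A) (hB : D1 B) (x t : ℝ) :
    pd1 (fun x t => A x t * B x t) x t = pd1 A x t * B x t + A x t * pd1 B x t := by
  ext i j
  simp only [pd1, of_apply, Matrix.add_apply, Matrix.mul_apply]
  rw [deriv_fun_sum (fun k _ => ((hA t i k x).fun_mul (hB t k j x))),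
    Finset.sum_congr rfl fun k _ => deriv_fun_mul (hA t i k x)
      (hB t k j x), Finset.sum_add_distrib]

lemma pd1_fromBlocks (A : ℝ → ℝ → Matrix α β ℂ) (B : ℝ → ℝ → Matrix α δ ℂ)
    (C : ℝ → ℝ → Matrix γ β ℂ) (D : ℝ → ℝ → Matrix γ δ ℂ) (x t : ℝ) :
    pd1 (fun x t => fromBlocks (A x t) (B x t) (C x t) (D x t)) x t
      = fromBlocks (pd1 A x t) (pd1 B x t) (pd1 C x t) (pd1 D x t) := by
  ext (i | i) (j | j) <;> rfl

lemma pd2_fromBlocks (A : ℝ → ℝ → Matrix α β ℂ) (B : ℝ → ℝ → Matrix α δ ℂ)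
    (C : ℝ → ℝ → Matrix γ β ℂ) (D : ℝ → ℝ → Matrix γ δ ℂ) (x t : ℝ) :
    pd2 (fun x t => fromBlocks (A x t) (B x t) (C x t) (D x t)) x t
      = fromBlocks (pd2 A x t) (pd2 B x t) (pd2 C x t) (pd2 D x t) := by
  ext (i | i) (j | j) <;> rfl

lemma D1.mul [Fintype β] {A : ℝ → ℝ → Matrix α β ℂ} {B : ℝ → ℝ → Matrix β γ ℂ}
    (hA : D1 A) (hB : D1 B) : D1 (fun x t => A x t * B x t) := by
  intro t i j
  simp only [Matrix.mul_apply]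
  exact Differentiable.fun_sum fun k _ => (hA t i k).mul (hB t k j)

lemma D1.smul (c : ℂ) {A : ℝ → ℝ → Matrix α β ℂ} (hA : D1 A) :
    D1 (fun x t => c • A x t) := by
  intro t i j
  simp only [Matrix.smul_apply, smul_eq_mul]
  exact (hA t i j).const_mul c

lemma D1.const (C : Matrix α β ℂ) : D1 (fun _ _ => C) := fun _ _ _ => differentiable_const _

lemma smooth_slice1 {M : ℝ → ℝ → Matrix α β ℂ} (h : MSmooth M) (i : α) (j : β) (t : ℝ) :
    ContDiff ℝ (⊤ : ℕ∞) (fun x => M x t i j) :=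
  (h i j).comp (contDiff_id.prodMk contDiff_const)
lemma msmooth_d1 {M : ℝ → ℝ → Matrix α β ℂ} (h : MSmooth M) : D1 M :=
  fun t i j => (smooth_slice1 h i j t).differentiable (by simp)
lemma msmooth_d1_pd1 {M : ℝ → ℝ → Matrix α β ℂ} (h : MSmooth M) : D1 (pd1 M) := by
  intro t i j
  have h2 : ContDiff ℝ (⊤ : ℕ∞) (fun x => M x t i j) := smooth_slice1 h i j t
  have := (contDiff_infty_iff_deriv.mp (h2.of_le (by exact_mod_cast le_rfl))).2
  exact this.differentiable (by simp)
end NLSaux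

open NLSaux in
theorem statement7 (m₁ m₂ : ℕ) (hm₁ : 0 < m₁) (hm₂ : 0 < m₂)
    (q : ℝ → ℝ → Matrix (Fin m₁) (Fin m₂) ℂ)
    (qb : ℝ → ℝ → Matrix (Fin m₂) (Fin m₁) ℂ)
    (p : ℝ → ℝ → Matrix (Fin m₁) (Fin m₁) ℂ)
    (hq : MSmooth q) (hqb : MSmooth qb) (hp : MSmooth p)
    (hNLS₁ : ∀ x t : ℝ, pd2 q x t = pd1 (pd1 q) x t - (2 : ℂ) • (q x t * qb x t * q x t))
    (hNLS₂ : ∀ x t : ℝ, pd2 qb x t = -(pd1 (pd1 qb) x t) + (2 : ℂ) • (qb x t * q x t * qb x t))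
    (hpx : ∀ x t : ℝ, pd1 p x t = -(q x t * qb x t))
    (ν : ℂ)
    (L M : ℝ → ℝ → Matrix (Fin m₁ ⊕ Fin m₂) (Fin m₁ ⊕ Fin m₂) ℂ)
    (hL : L = fun x t => Matrix.fromBlocks (ν • 1) (q x t) (qb x t) 0)
    (hM : M = fun x t => Matrix.fromBlocks
      (ν ^ 2 • 1 + q x t * qb x t + (2 : ℂ) • pd1 p x t)
      (ν • q x t + pd1 q x t)
      (ν • qb x t - pd1 qb x t)
      (qb x t * q x t)) :
    ∀ x t : ℝ,
      pd2 L x t - pd1 M x t = M x t * L x t - L x t * M x t := by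
  have hM' : M = fun x t => Matrix.fromBlocks
      (ν ^ 2 • 1 - q x t * qb x t)
      (ν • q x t + pd1 q x t)
      (ν • qb x t - pd1 qb x t)
      (qb x t * q x t) := by
    rw [hM]; funext x t
    rw [hpx x t, Matrix.fromBlocks_inj]
    exact ⟨by module, rfl, rfl, rfl⟩
  intro x t
  rw [hL, hM']
  have eL : pd2 (fun x t => Matrix.fromBlocks (ν • (1 : Matrix (Fin m₁) (Fin m₁) ℂ))
      (q x t) (qb x t) (0 : Matrix (Fin m₂) (Fin m₂) ℂ)) x t
      = Matrix.fromBlocks 0 (pd2 q x t) (pd2 qb x t) 0 := by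
    rw [pd2_fromBlocks (fun _ _ => ν • (1 : Matrix (Fin m₁) (Fin m₁) ℂ)) q qb
      (fun _ _ => (0 : Matrix (Fin m₂) (Fin m₂) ℂ)) x t, pd2_const, pd2_const]
  have eM : pd1 (fun x t => Matrix.fromBlocks
      (ν ^ 2 • (1 : Matrix (Fin m₁) (Fin m₁) ℂ) - q x t * qb x t)
      (ν • q x t + pd1 q x t) (ν • qb x t - pd1 qb x t) (qb x t * q x t)) x t
      = Matrix.fromBlocks
        (-(pd1 q x t * qb x t + q x t * pd1 qb x t))
        (ν • pd1 q x t + pd1 (pd1 q) x t)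
        (ν • pd1 qb x t - pd1 (pd1 qb) x t)
        (pd1 qb x t * q x t + qb x t * pd1 q x t) := by
    rw [pd1_fromBlocks
      (fun x t => ν ^ 2 • (1 : Matrix (Fin m₁) (Fin m₁) ℂ) - q x t * qb x t)
      (fun x t => ν • q x t + pd1 q x t)
      (fun x t => ν • qb x t - pd1 qb x t)
      (fun x t => qb x t * q x t) x t,
      pd1_sub _ _ (D1.const _) ((msmooth_d1 hq).mul (msmooth_d1 hqb)) x t,
      pd1_const,
      pd1_mul q qb (msmooth_d1 hq) (msmooth_d1 hqb) x t,
      pd1_add _ _ ((msmooth_d1 hq).smul ν) (msmooth_d1_pd1 hq) x t,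
      pd1_smul ν q x t,
      pd1_sub _ _ ((msmooth_d1 hqb).smul ν) (msmooth_d1_pd1 hqb) x t,
      pd1_smul ν qb x t,
      pd1_mul qb q (msmooth_d1 hqb) (msmooth_d1 hq) x t,
      zero_sub]
  rw [eL, eM, hNLS₁ x t, hNLS₂ x t, Matrix.fromBlocks_multiply, Matrix.fromBlocks_multiply,
    sub_eq_add_neg, sub_eq_add_neg (Matrix.fromBlocks _ _ _ _), Matrix.fromBlocks_neg,
    Matrix.fromBlocks_neg, Matrix.fromBlocks_add, Matrix.fromBlocks_add, Matrix.fromBlocks_inj]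
  refine ⟨?_, ?_, ?_, ?_⟩ <;>
    · simp only [Matrix.smul_mul, Matrix.mul_smul, Matrix.sub_mul, Matrix.mul_sub,
        Matrix.add_mul, Matrix.mul_add, Matrix.mul_one, Matrix.one_mul, Matrix.mul_assoc,
        Matrix.zero_mul, Matrix.mul_zero, smul_smul]
      module
end
end

section
/- Let φ be a smooth m×m complex-matrix-valued function of (x̄, t̄) ∈ ℝ² satisfying the constraint (φ_{x̄})² = φ_{x̄} and the equation φ_{t̄} = [φ_{x̄}, φ_{x̄x̄}]. Then: (i) φ_{x̄} φ_{x̄x̄} φ_{x̄} = 0; (ii) the matrix 𝒮 = 2 φ_{x̄} − I_m satisfies 𝒮² = I_m and the generalized Heisenberg magnet equation 2 𝒮_{t̄} = [𝒮, 𝒮_{x̄x̄}]; and (iii) φ satisfies the nonlinear part of the potential KP equation, ((φ_{x̄})²)_{x̄} − [φ_{x̄}, φ_{t̄}] = 0. -/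
open Matrix

noncomputable section

lemma cast1' : (1 : WithTop ℕ∞) ≤ ((⊤:ℕ∞) : WithTop ℕ∞) := by exact_mod_cast le_top
lemma cast2' : ((⊤:ℕ∞) : WithTop ℕ∞) + 1 ≤ ((⊤:ℕ∞) : WithTop ℕ∞) := by exact_mod_cast le_top

section scalar

variable {f : ℝ × ℝ → ℂ}

lemma sderiv1 (hf : ContDiff ℝ (⊤:ℕ∞) f) (x t : ℝ) :
    HasDerivAt (fun x' => f (x', t)) (fderiv ℝ f (x, t) (1, 0)) x :=
  ((hf.differentiable (by simp) (x, t)).hasFDerivAt).comp_hasDerivAt x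
    ((hasDerivAt_id x).prodMk (hasDerivAt_const x t))

lemma sderiv2 (hf : ContDiff ℝ (⊤:ℕ∞) f) (x t : ℝ) :
    HasDerivAt (fun t' => f (x, t')) (fderiv ℝ f (x, t) (0, 1)) t :=
  ((hf.differentiable (by simp) (x, t)).hasFDerivAt).comp_hasDerivAt t
    ((hasDerivAt_const t x).prodMk (hasDerivAt_id t))

lemma smooth_fd (hf : ContDiff ℝ (⊤:ℕ∞) f) (u : ℝ × ℝ) :
    ContDiff ℝ (⊤:ℕ∞) (fun v => fderiv ℝ f v u) :=
  (hf.fderiv_right cast2').clm_apply contDiff_const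

lemma fd_clm (hf : ContDiff ℝ (⊤:ℕ∞) f) (p u : ℝ × ℝ) :
    fderiv ℝ (fun v => fderiv ℝ f v u) p = (fderiv ℝ (fderiv ℝ f) p).flip u := by
  rw [fderiv_clm_apply ((hf.fderiv_right cast2').differentiable (by simp) p)
    (differentiableAt_const u)]
  simp

lemma swap' (hf : ContDiff ℝ (⊤:ℕ∞) f) (p v w : ℝ × ℝ) :
    fderiv ℝ (fderiv ℝ f) p v w = fderiv ℝ (fderiv ℝ f) p w v :=
  second_derivative_symmetric (fun y => (hf.differentiable (by simp) y).hasFDerivAt)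
    (((hf.fderiv_right cast2').differentiable (by simp) p).hasFDerivAt) v w

lemma deriv1_line (hf : ContDiff ℝ (⊤:ℕ∞) f) (x t : ℝ) (u : ℝ × ℝ) :
    deriv (fun x' => fderiv ℝ f (x', t) u) x
      = fderiv ℝ (fderiv ℝ f) (x, t) (1, 0) u := by
  have h := sderiv1 (smooth_fd hf u) x t
  rw [h.deriv, fd_clm hf (x, t) u]; rfl

lemma deriv2_line (hf : ContDiff ℝ (⊤:ℕ∞) f) (x t : ℝ) (u : ℝ × ℝ) :
    deriv (fun t' => fderiv ℝ f (x, t') u) t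
      = fderiv ℝ (fderiv ℝ f) (x, t) (0, 1) u := by
  have h := sderiv2 (smooth_fd hf u) x t
  rw [h.deriv, fd_clm hf (x, t) u]; rfl

end scalar

section matrixlayer

variable {α β : Type*} {M N : ℝ → ℝ → Matrix α β ℂ}

lemma pd1_eq (hM : MSmooth M) (x t : ℝ) (i : α) (j : β) :
    pd1 M x t i j = fderiv ℝ (fun v : ℝ × ℝ => M v.1 v.2 i j) (x, t) (1, 0) :=
  (sderiv1 (hM i j) x t).deriv

lemma pd2_eq (hM : MSmooth M) (x t : ℝ) (i : α) (j : β) :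
    pd2 M x t i j = fderiv ℝ (fun v : ℝ × ℝ => M v.1 v.2 i j) (x, t) (0, 1) :=
  (sderiv2 (hM i j) x t).deriv

lemma hasD1 (hM : MSmooth M) (x t : ℝ) (i : α) (j : β) :
    HasDerivAt (fun x' => M x' t i j) (pd1 M x t i j) x := by
  rw [pd1_eq hM]; exact sderiv1 (hM i j) x t

lemma hasD2 (hM : MSmooth M) (x t : ℝ) (i : α) (j : β) :
    HasDerivAt (fun t' => M x t' i j) (pd2 M x t i j) t := by
  rw [pd2_eq hM]; exact sderiv2 (hM i j) x t

lemma msmooth_pd1 (hM : MSmooth M) : MSmooth (pd1 M) := by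
  intro i j
  have he : (fun v : ℝ × ℝ => pd1 M v.1 v.2 i j)
      = fun v => fderiv ℝ (fun w : ℝ × ℝ => M w.1 w.2 i j) v (1, 0) :=
    funext fun v => pd1_eq hM v.1 v.2 i j
  rw [he]; exact smooth_fd (hM i j) _

lemma msmooth_pd2 (hM : MSmooth M) : MSmooth (pd2 M) := by
  intro i j
  have he : (fun v : ℝ × ℝ => pd2 M v.1 v.2 i j)
      = fun v => fderiv ℝ (fun w : ℝ × ℝ => M w.1 w.2 i j) v (0, 1) :=
    funext fun v => pd2_eq hM v.1 v.2 i j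
  rw [he]; exact smooth_fd (hM i j) _

lemma pd_swap (hM : MSmooth M) (x t : ℝ) :
    pd2 (pd1 M) x t = pd1 (pd2 M) x t := by
  ext i j
  have hf : ContDiff ℝ (⊤:ℕ∞) (fun v : ℝ × ℝ => M v.1 v.2 i j) := hM i j
  show deriv (fun t' => pd1 M x t' i j) t = deriv (fun x' => pd2 M x' t i j) x
  have e1 : (fun t' => pd1 M x t' i j)
      = fun t' => fderiv ℝ (fun v : ℝ × ℝ => M v.1 v.2 i j) (x, t') (1, 0) :=
    funext fun t' => pd1_eq hM x t' i j
  have e2 : (fun x' => pd2 M x' t i j)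
      = fun x' => fderiv ℝ (fun v : ℝ × ℝ => M v.1 v.2 i j) (x', t) (0, 1) :=
    funext fun x' => pd2_eq hM x' t i j
  rw [e1, e2, deriv2_line hf, deriv1_line hf, swap' hf]

end matrixlayer

section sq

variable {m : ℕ} {M N : ℝ → ℝ → Matrix (Fin m) (Fin m) ℂ}

lemma pd1_mul (hM : MSmooth M) (hN : MSmooth N) (x t : ℝ) :
    pd1 (fun x t => M x t * N x t) x t = pd1 M x t * N x t + M x t * pd1 N x t := by
  ext i j
  have h : HasDerivAt (fun x' => (M x' t * N x' t) i j)
      (∑ k, (pd1 M x t i k * N x t k j + M x t i k * pd1 N x t k j)) x := by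
    simp only [Matrix.mul_apply]
    exact HasDerivAt.fun_sum fun k _ => (hasD1 hM x t i k).mul (hasD1 hN x t k j)
  show deriv (fun x' => (M x' t * N x' t) i j) x = _
  rw [h.deriv]
  simp [Matrix.mul_apply, Matrix.add_apply, Finset.sum_add_distrib]

lemma msmooth_mul (hM : MSmooth M) (hN : MSmooth N) :
    MSmooth (fun x t => M x t * N x t) := by
  intro i j
  have he : (fun v : ℝ × ℝ => (M v.1 v.2 * N v.1 v.2) i j)
      = fun v => ∑ k, M v.1 v.2 i k * N v.1 v.2 k j := by
    funext v; exact Matrix.mul_apply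
  rw [he]
  exact ContDiff.sum fun k _ => (hM i k).mul (hN k j)

lemma pd1_sub (hM : MSmooth M) (hN : MSmooth N) (x t : ℝ) :
    pd1 (fun x t => M x t - N x t) x t = pd1 M x t - pd1 N x t := by
  ext i j
  have h : HasDerivAt (fun x' => (M x' t - N x' t) i j)
      (pd1 M x t i j - pd1 N x t i j) x := by
    simp only [Matrix.sub_apply]
    exact (hasD1 hM x t i j).sub (hasD1 hN x t i j)
  show deriv (fun x' => (M x' t - N x' t) i j) x = _
  rw [h.deriv]; simp

lemma pd1_smul (hM : MSmooth M) (c : ℂ) (x t : ℝ) :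
    pd1 (fun x t => c • M x t) x t = c • pd1 M x t := by
  ext i j
  have h : HasDerivAt (fun x' => (c • M x' t) i j) (c * pd1 M x t i j) x := by
    simp only [Matrix.smul_apply, smul_eq_mul]
    exact (hasD1 hM x t i j).const_mul c
  show deriv (fun x' => (c • M x' t) i j) x = _
  rw [h.deriv]; simp

end sq

theorem statement8 (m : ℕ) (hm : 0 < m)
    (φ : ℝ → ℝ → Matrix (Fin m) (Fin m) ℂ)
    (hφ : MSmooth φ)
    (hconstraint : ∀ x t : ℝ, pd1 φ x t * pd1 φ x t = pd1 φ x t)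
    (heq : ∀ x t : ℝ,
      pd2 φ x t = pd1 φ x t * pd1 (pd1 φ) x t - pd1 (pd1 φ) x t * pd1 φ x t)
    (𝒮 : ℝ → ℝ → Matrix (Fin m) (Fin m) ℂ)
    (h𝒮 : 𝒮 = fun x t => (2 : ℂ) • pd1 φ x t - 1) :
    (∀ x t : ℝ, pd1 φ x t * pd1 (pd1 φ) x t * pd1 φ x t = 0) ∧
    (∀ x t : ℝ, 𝒮 x t * 𝒮 x t = 1) ∧
    (∀ x t : ℝ,
      (2 : ℂ) • pd2 𝒮 x t = 𝒮 x t * pd1 (pd1 𝒮) x t - pd1 (pd1 𝒮) x t * 𝒮 x t) ∧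
    (∀ x t : ℝ,
      pd1 (fun x t => pd1 φ x t * pd1 φ x t) x t
        - (pd1 φ x t * pd2 φ x t - pd2 φ x t * pd1 φ x t) = 0) := by
  have h1 : MSmooth (pd1 φ) := msmooth_pd1 hφ
  have h2 : MSmooth (pd1 (pd1 φ)) := msmooth_pd1 h1
  have h3 : MSmooth (pd1 (pd1 (pd1 φ))) := msmooth_pd1 h2
  have hfn : (fun x t => pd1 φ x t * pd1 φ x t) = pd1 φ :=
    funext fun x => funext fun t => hconstraint x t
  -- differentiated constraint
  have hb : ∀ x t : ℝ, pd1 (pd1 φ) x t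
      = pd1 (pd1 φ) x t * pd1 φ x t + pd1 φ x t * pd1 (pd1 φ) x t := by
    intro x t
    conv_lhs => rw [← hfn]
    rw [pd1_mul h1 h1 x t]
  -- (i)
  have hi : ∀ x t : ℝ, pd1 φ x t * pd1 (pd1 φ) x t * pd1 φ x t = 0 := by
    intro x t
    set a := pd1 φ x t with ha
    set b := pd1 (pd1 φ) x t with hbd
    have haa : a * a = a := hconstraint x t
    have hb' : b = b * a + a * b := hb x t
    have h2' : a * b * a = a * b * a + a * b * a := by
      conv_lhs => rw [hb']
      have e : a * (b * a + a * b) * a = a * b * (a * a) + (a * a) * (b * a) := by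
        noncomm_ring
      rw [e, haa, ← mul_assoc a b a]
    exact (left_eq_add.mp h2')
  refine ⟨hi, ?_, ?_, ?_⟩
  · intro x t
    rw [h𝒮]
    have haa := hconstraint x t
    simp only [sub_mul, mul_sub, smul_mul_assoc, mul_smul_comm, haa, one_mul, mul_one,
      smul_smul]
    module
  · -- Heisenberg
    have hS1 : ∀ x t : ℝ, pd1 𝒮 x t = (2:ℂ) • pd1 (pd1 φ) x t := by
      intro x t; ext i j
      show deriv (fun x' => 𝒮 x' t i j) x = ((2:ℂ) • pd1 (pd1 φ) x t) i j
      have he : (fun x' => 𝒮 x' t i j)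
          = fun x' => 2 * pd1 φ x' t i j - (1 : Matrix (Fin m) (Fin m) ℂ) i j := by
        funext x'; rw [h𝒮]; simp [Matrix.sub_apply, Matrix.smul_apply, smul_eq_mul]
      have h : HasDerivAt (fun x' => 𝒮 x' t i j) (2 * pd1 (pd1 φ) x t i j) x := by
        rw [he]
        exact ((hasD1 h1 x t i j).const_mul (2:ℂ)).sub_const _
      rw [h.deriv]; simp
    have hS2 : ∀ x t : ℝ, pd2 𝒮 x t = (2:ℂ) • pd2 (pd1 φ) x t := by
      intro x t; ext i j
      show deriv (fun t' => 𝒮 x t' i j) t = ((2:ℂ) • pd2 (pd1 φ) x t) i j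
      have he : (fun t' => 𝒮 x t' i j)
          = fun t' => 2 * pd1 φ x t' i j - (1 : Matrix (Fin m) (Fin m) ℂ) i j := by
        funext t'; rw [h𝒮]; simp [Matrix.sub_apply, Matrix.smul_apply, smul_eq_mul]
      have h : HasDerivAt (fun t' => 𝒮 x t' i j) (2 * pd2 (pd1 φ) x t i j) t := by
        rw [he]
        exact ((hasD2 h1 x t i j).const_mul (2:ℂ)).sub_const _
      rw [h.deriv]; simp
    have hSfn : pd1 𝒮 = fun x t => (2:ℂ) • pd1 (pd1 φ) x t :=
      funext fun x => funext fun t => hS1 x t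
    intro x t
    have hSxx : pd1 (pd1 𝒮) x t = (2:ℂ) • pd1 (pd1 (pd1 φ)) x t := by
      rw [hSfn, pd1_smul h2]
    -- pd2 (pd1 φ) = pd1 (pd2 φ) = a*c - c*a
    have hpd2fn : pd2 φ
        = fun x t => pd1 φ x t * pd1 (pd1 φ) x t - pd1 (pd1 φ) x t * pd1 φ x t :=
      funext fun x => funext fun t => heq x t
    have hmix : pd2 (pd1 φ) x t
        = pd1 φ x t * pd1 (pd1 (pd1 φ)) x t - pd1 (pd1 (pd1 φ)) x t * pd1 φ x t := by
      rw [pd_swap hφ x t]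
      conv_lhs => rw [hpd2fn]
      rw [pd1_sub (msmooth_mul h1 h2) (msmooth_mul h2 h1) x t,
        pd1_mul h1 h2 x t, pd1_mul h2 h1 x t]
      abel
    rw [hS2, hSxx, h𝒮, hmix]
    set a := pd1 φ x t
    set c := pd1 (pd1 (pd1 φ)) x t
    simp only [sub_mul, mul_sub, smul_mul_assoc, mul_smul_comm, smul_smul, one_mul, mul_one,
      smul_sub]
    module
  · intro x t
    rw [hfn, heq x t]
    set a := pd1 φ x t with ha
    set b := pd1 (pd1 φ) x t with hbd
    have haa : a * a = a := hconstraint x t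
    have hb' : b = b * a + a * b := hb x t
    have hi' : a * b * a = 0 := hi x t
    have expand : a * (a * b - b * a) - (a * b - b * a) * a
        = (a * a) * b + b * (a * a) - (a * b * a + a * b * a) := by
      noncomm_ring
    rw [expand, haa, hi']
    have final : b - (a * b + b * a - ((0 : Matrix (Fin m) (Fin m) ℂ) + 0))
        = b - (b * a + a * b) := by abel
    rw [final, ← hb', sub_self]
end
end

section
/- Let m be a positive integer, ε = ±1, and let q : ℝ² → Mat(m,ℂ), z : ℝ² → ℝ, u : ℝ² → Mat(m,ℂ) be smooth (variables (x,x̄) for q and z, variables (x,ζ) for u), satisfying: z_x(x,x̄) I_m = 2 ε q(x,x̄)², q_{x x̄} = z_{x̄} q, z_{x̄}(x,x̄) ≠ 0 for all (x,x̄), and u(x, z(x,x̄)) = 2 q(x,x̄) for all (x,x̄). Then u satisfies the matrix short pulse equation along the image of the change of variables: for every (x,x̄), u_{xζ}(x, z(x,x̄)) = u(x, z(x,x̄)) − (ε/2) (u² u_ζ)_ζ (x, z(x,x̄)). -/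
open Matrix

noncomputable section

section Helpers

variable {E : Type*} [NormedAddCommGroup E] [NormedSpace ℝ E]

lemma slice2_contDiff {f : ℝ → ℝ → E}
    (hf : ContDiff ℝ (⊤:ℕ∞) fun v : ℝ×ℝ => f v.1 v.2) (x : ℝ) :
    ContDiff ℝ (⊤:ℕ∞) fun t => f x t :=
  hf.comp (contDiff_const.prodMk contDiff_id)

lemma slice1_contDiff {f : ℝ → ℝ → E}
    (hf : ContDiff ℝ (⊤:ℕ∞) fun v : ℝ×ℝ => f v.1 v.2) (t : ℝ) :
    ContDiff ℝ (⊤:ℕ∞) fun x => f x t :=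
  hf.comp (contDiff_id.prodMk contDiff_const)

lemma hasDerivAt_slice2 {f : ℝ → ℝ → E}
    (hf : ContDiff ℝ (⊤:ℕ∞) fun v : ℝ×ℝ => f v.1 v.2) (x t : ℝ) :
    HasDerivAt (fun t' => f x t')
      (fderiv ℝ (fun v : ℝ×ℝ => f v.1 v.2) (x, t) ((0:ℝ), (1:ℝ))) t := by
  have hF : HasFDerivAt (fun v : ℝ×ℝ => f v.1 v.2)
      (fderiv ℝ (fun v : ℝ×ℝ => f v.1 v.2) (x, t)) (x, t) :=
    (hf.differentiable (by simp) (x, t)).hasFDerivAt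
  have hγ : HasDerivAt (fun t' : ℝ => ((x : ℝ), t')) ((0:ℝ), (1:ℝ)) t :=
    (hasDerivAt_const t x).prodMk (hasDerivAt_id t)
  exact hF.comp_hasDerivAt t hγ

lemma hasDerivAt_slice1 {f : ℝ → ℝ → E}
    (hf : ContDiff ℝ (⊤:ℕ∞) fun v : ℝ×ℝ => f v.1 v.2) (x t : ℝ) :
    HasDerivAt (fun x' => f x' t)
      (fderiv ℝ (fun v : ℝ×ℝ => f v.1 v.2) (x, t) ((1:ℝ), (0:ℝ))) x := by
  have hF : HasFDerivAt (fun v : ℝ×ℝ => f v.1 v.2)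
      (fderiv ℝ (fun v : ℝ×ℝ => f v.1 v.2) (x, t)) (x, t) :=
    (hf.differentiable (by simp) (x, t)).hasFDerivAt
  have hγ : HasDerivAt (fun x' : ℝ => (x', (t : ℝ))) ((1:ℝ), (0:ℝ)) x :=
    (hasDerivAt_id x).prodMk (hasDerivAt_const x t)
  exact hF.comp_hasDerivAt x hγ

lemma pd2_contDiff {f : ℝ → ℝ → E}
    (hf : ContDiff ℝ (⊤:ℕ∞) fun v : ℝ×ℝ => f v.1 v.2) :
    ContDiff ℝ (⊤:ℕ∞) fun v : ℝ×ℝ => deriv (fun t' => f v.1 t') v.2 := by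
  have h : (fun v : ℝ×ℝ => deriv (fun t' => f v.1 t') v.2)
      = fun v : ℝ×ℝ => (ContinuousLinearMap.apply ℝ E ((0:ℝ),(1:ℝ)))
          (fderiv ℝ (fun v : ℝ×ℝ => f v.1 v.2) v) := by
    funext v
    exact (hasDerivAt_slice2 hf v.1 v.2).deriv
  rw [h]
  exact (ContinuousLinearMap.apply ℝ E ((0:ℝ),(1:ℝ))).contDiff.comp
    (hf.fderiv_right (by exact_mod_cast le_top))

lemma pd1_contDiff {f : ℝ → ℝ → E}
    (hf : ContDiff ℝ (⊤:ℕ∞) fun v : ℝ×ℝ => f v.1 v.2) :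
    ContDiff ℝ (⊤:ℕ∞) fun v : ℝ×ℝ => deriv (fun x' => f x' v.2) v.1 := by
  have h : (fun v : ℝ×ℝ => deriv (fun x' => f x' v.2) v.1)
      = fun v : ℝ×ℝ => (ContinuousLinearMap.apply ℝ E ((1:ℝ),(0:ℝ)))
          (fderiv ℝ (fun v : ℝ×ℝ => f v.1 v.2) v) := by
    funext v
    exact (hasDerivAt_slice1 hf v.1 v.2).deriv
  rw [h]
  exact (ContinuousLinearMap.apply ℝ E ((1:ℝ),(0:ℝ))).contDiff.comp
    (hf.fderiv_right (by exact_mod_cast le_top))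

lemma hasDerivAt_total {f : ℝ → ℝ → E}
    (hf : ContDiff ℝ (⊤:ℕ∞) fun v : ℝ×ℝ => f v.1 v.2)
    {ζ : ℝ → ℝ} {a x : ℝ} (hz : HasDerivAt ζ a x) :
    HasDerivAt (fun x' => f x' (ζ x'))
      (deriv (fun x' => f x' (ζ x)) x + a • deriv (fun t => f x t) (ζ x)) x := by
  have hF : HasFDerivAt (fun v : ℝ×ℝ => f v.1 v.2)
      (fderiv ℝ (fun v : ℝ×ℝ => f v.1 v.2) (x, ζ x)) (x, ζ x) :=
    (hf.differentiable (by simp) (x, ζ x)).hasFDerivAt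
  have hγ : HasDerivAt (fun x' : ℝ => (x', ζ x')) ((1:ℝ), a) x :=
    (hasDerivAt_id x).prodMk hz
  have h := hF.comp_hasDerivAt x hγ
  have hval : (fderiv ℝ (fun v : ℝ×ℝ => f v.1 v.2) (x, ζ x)) ((1:ℝ), a)
      = deriv (fun x' => f x' (ζ x)) x + a • deriv (fun t => f x t) (ζ x) := by
    have h10 : ((1:ℝ), a) = ((1:ℝ),(0:ℝ)) + a • ((0:ℝ),(1:ℝ)) := by simp
    rw [h10, map_add, ContinuousLinearMap.map_smul, ← (hasDerivAt_slice1 hf x (ζ x)).deriv,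
      ← (hasDerivAt_slice2 hf x (ζ x)).deriv]
  rwa [hval] at h

end Helpers

theorem statement12 (m : ℕ) (hm : 0 < m)
    (ε : ℂ) (hε : ε = 1 ∨ ε = -1)
    (q : ℝ → ℝ → Matrix (Fin m) (Fin m) ℂ)
    (z : ℝ → ℝ → ℝ)
    (u : ℝ → ℝ → Matrix (Fin m) (Fin m) ℂ)
    (hq : MSmooth q) (hu : MSmooth u)
    (hz : ContDiff ℝ (⊤ : ℕ∞) fun v : ℝ × ℝ => z v.1 v.2)
    (hzx : ∀ x xb : ℝ,
      ((deriv (fun x' => z x' xb) x : ℝ) : ℂ) • (1 : Matrix (Fin m) (Fin m) ℂ)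
        = (2 * ε) • (q x xb * q x xb))
    (hqxxb : ∀ x xb : ℝ,
      pd2 (pd1 q) x xb = ((deriv (fun s => z x s) xb : ℝ) : ℂ) • q x xb)
    (hzxb : ∀ x xb : ℝ, deriv (fun s => z x s) xb ≠ 0)
    (hcomp : ∀ x xb : ℝ, u x (z x xb) = (2 : ℂ) • q x xb) :
    ∀ x xb : ℝ,
      pd2 (pd1 u) x (z x xb) =
        u x (z x xb)
          - (ε / 2) • pd2 (fun x ζ => u x ζ * u x ζ * pd2 u x ζ) x (z x xb) := by
  have hεne : ε ≠ 0 := by rcases hε with h | h <;> rw [h] <;> norm_num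
  intro x xb
  -- basic differentiability of slices
  have hWd : ∀ s : ℝ, HasDerivAt (fun t => z x t) (deriv (fun t => z x t) s) s := fun s =>
    (((slice2_contDiff hz x).differentiable (by simp)) s).hasDerivAt
  have hZxd : ∀ s : ℝ, HasDerivAt (fun x' => z x' s) (deriv (fun x' => z x' s) x) x := fun s =>
    (((slice1_contDiff hz s).differentiable (by simp)) x).hasDerivAt
  have hWne : ∀ s : ℝ, ((deriv (fun t => z x t) s : ℝ) : ℂ) ≠ 0 := fun s =>
    Complex.ofReal_ne_zero.mpr (hzxb x s)
  -- entry slice differentiability for u, q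
  have hud2 : ∀ (i j : Fin m) (t : ℝ), DifferentiableAt ℝ (fun t' => u x t' i j) t := fun i j t =>
    ((slice2_contDiff (f := fun a t => u a t i j) (hu i j) x).differentiable (by simp)) t
  have hqd2 : ∀ (i j : Fin m) (s : ℝ), DifferentiableAt ℝ (fun s' => q x s' i j) s := fun i j s =>
    ((slice2_contDiff (f := fun a s => q a s i j) (hq i j) x).differentiable (by simp)) s
  -- (I) : w * (pd2 u)∘z = 2 * pd2 q
  have hI : ∀ (s : ℝ) (i j : Fin m),
      ((deriv (fun t => z x t) s : ℝ) : ℂ) * pd2 u x (z x s) i j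
        = 2 * pd2 q x s i j := by
    intro s i j
    have hinner : HasDerivAt (fun t' => u x t' i j) (pd2 u x (z x s) i j) (z x s) :=
      (hud2 i j (z x s)).hasDerivAt
    have h1 : HasDerivAt (fun s' => u x (z x s') i j)
        ((deriv (fun t => z x t) s) • pd2 u x (z x s) i j) s := hinner.scomp s (hWd s)
    have h2 : HasDerivAt (fun s' => (2:ℂ) * q x s' i j) (2 * pd2 q x s i j) s :=
      ((hqd2 i j s).hasDerivAt).const_mul 2
    have hfe : ∀ s' : ℝ, (2:ℂ) * q x s' i j = u x (z x s') i j := by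
      intro s'; rw [hcomp x s']; simp [Matrix.smul_apply, smul_eq_mul]
    have h1' := h1.congr_of_eventuallyEq (Filter.Eventually.of_forall hfe)
    have huniq := h1'.unique h2
    rw [← huniq, Complex.real_smul]
  -- pd2 u ∘ z in terms of pd2 q
  have hUz : ∀ (s : ℝ) (i j : Fin m),
      pd2 u x (z x s) i j
        = ((deriv (fun t => z x t) s : ℝ) : ℂ)⁻¹ * (2 * pd2 q x s i j) := by
    intro s i j
    rw [← hI s i j, ← mul_assoc, inv_mul_cancel₀ (hWne s), one_mul]
  -- (II) : pd1 u ∘ z + zx * pd2 u ∘ z = 2 pd1 q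
  have hII : ∀ (s : ℝ) (i j : Fin m),
      pd1 u x (z x s) i j
        + ((deriv (fun x' => z x' s) x : ℝ) : ℂ) * pd2 u x (z x s) i j
        = 2 * pd1 q x s i j := by
    intro s i j
    have h1 := hasDerivAt_total (f := fun a b => u a b i j) (hu i j) (hZxd s)
    have h2 : HasDerivAt (fun x' => (2:ℂ) * q x' s i j) (2 * pd1 q x s i j) x :=
      ((((slice1_contDiff (f := fun a s => q a s i j) (hq i j) s).differentiable (by simp)) x).hasDerivAt).const_mul 2
    have hfe : ∀ x' : ℝ, (2:ℂ) * q x' s i j = u x' (z x' s) i j := by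
      intro x'; rw [hcomp x' s]; simp [Matrix.smul_apply, smul_eq_mul]
    have h1' := h1.congr_of_eventuallyEq (Filter.Eventually.of_forall hfe)
    have huniq := h1'.unique h2
    rw [← huniq, Complex.real_smul]
    rfl
  -- (A)
  have hA : ∀ (s : ℝ) (i j : Fin m),
      pd1 u x (z x s) i j
        = 2 * pd1 q x s i j
          - 2 * ((deriv (fun x' => z x' s) x : ℝ) : ℂ)
              * ((deriv (fun t => z x t) s : ℝ) : ℂ)⁻¹ * pd2 q x s i j := by
    intro s i j
    have h2 := hII s i j
    rw [hUz s i j] at h2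
    linear_combination h2
  -- (B)
  have hB : ∀ (s : ℝ) (i j : Fin m),
      (u x (z x s) * u x (z x s) * pd2 u x (z x s)) i j
        = ε⁻¹ * 2 * (2 * ((deriv (fun x' => z x' s) x : ℝ) : ℂ)
            * ((deriv (fun t => z x t) s : ℝ) : ℂ)⁻¹ * pd2 q x s i j) := by
    intro s i j
    have hqq : q x s * q x s
        = ((2*ε)⁻¹ * ((deriv (fun x' => z x' s) x : ℝ) : ℂ)) • (1 : Matrix (Fin m) (Fin m) ℂ) := by
      have h := (hzx x s).symm
      calc q x s * q x s
          = ((2*ε)⁻¹) • ((2*ε) • (q x s * q x s)) := by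
            rw [smul_smul, inv_mul_cancel₀ (mul_ne_zero two_ne_zero hεne), one_smul]
        _ = ((2*ε)⁻¹) • (((deriv (fun x' => z x' s) x : ℝ) : ℂ) • (1 : Matrix (Fin m) (Fin m) ℂ)) := by rw [h]
        _ = _ := by rw [smul_smul]
    have hAA : u x (z x s) * u x (z x s) = (4:ℂ) • (q x s * q x s) := by
      rw [hcomp x s, smul_mul_assoc, mul_smul_comm, smul_smul]; norm_num
    have hprod : u x (z x s) * u x (z x s) * pd2 u x (z x s)
        = ((4:ℂ) * ((2*ε)⁻¹ * ((deriv (fun x' => z x' s) x : ℝ) : ℂ))) • pd2 u x (z x s) := by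
      rw [hAA, hqq, smul_smul, smul_mul_assoc, one_mul]
    rw [hprod, Matrix.smul_apply, smul_eq_mul, hUz s i j, mul_inv]
    ring
  -- now the endgame at the point (x, xb)
  ext i j
  simp only [Matrix.sub_apply, Matrix.smul_apply, smul_eq_mul]
  -- differentiability of the auxiliary scalar functions of s
  have hZxC : DifferentiableAt ℝ (fun s => ((deriv (fun x' => z x' s) x : ℝ) : ℂ)) xb := by
    have hr : ContDiff ℝ (⊤:ℕ∞) (fun s : ℝ => deriv (fun x' => z x' s) x) :=
      slice2_contDiff (f := fun a s => deriv (fun x' => z x' s) a) (pd1_contDiff hz) x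
    exact Complex.ofRealCLM.differentiableAt.comp xb
      ((hr.differentiable (by simp)) xb)
  have hWC : DifferentiableAt ℝ (fun s => ((deriv (fun t => z x t) s : ℝ) : ℂ)) xb := by
    have hr : ContDiff ℝ (⊤:ℕ∞) (fun s : ℝ => deriv (fun t => z x t) s) :=
      slice2_contDiff (f := fun a s => deriv (fun t => z a t) s) (pd2_contDiff hz) x
    exact Complex.ofRealCLM.differentiableAt.comp xb
      ((hr.differentiable (by simp)) xb)
  have hp2q : DifferentiableAt ℝ (fun s => pd2 q x s i j) xb :=
    ((slice2_contDiff (f := fun a s => deriv (fun t' => q a t' i j) s)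
      (pd2_contDiff (f := fun a b => q a b i j) (hq i j)) x).differentiable (by simp)) xb
  have hgd : DifferentiableAt ℝ
      (fun s => 2 * ((deriv (fun x' => z x' s) x : ℝ) : ℂ)
        * ((deriv (fun t => z x t) s : ℝ) : ℂ)⁻¹ * pd2 q x s i j) xb :=
    (((hZxC.const_mul 2).mul (hWC.inv (hWne xb))).mul hp2q)
  set Dg : ℂ := deriv (fun s => 2 * ((deriv (fun x' => z x' s) x : ℝ) : ℂ)
      * ((deriv (fun t => z x t) s : ℝ) : ℂ)⁻¹ * pd2 q x s i j) xb with hDg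
  -- e1
  have hp1ud : DifferentiableAt ℝ (fun t => pd1 u x t i j) (z x xb) :=
    ((slice2_contDiff (f := fun a t => deriv (fun x' => u x' t i j) a)
      (pd1_contDiff (f := fun a b => u a b i j) (hu i j)) x).differentiable (by simp)) (z x xb)
  have hL : HasDerivAt (fun s => pd1 u x (z x s) i j)
      ((deriv (fun t => z x t) xb) • pd2 (pd1 u) x (z x xb) i j) xb :=
    (hp1ud.hasDerivAt).scomp xb (hWd xb)
  have hp1qd : DifferentiableAt ℝ (fun s => pd1 q x s i j) xb :=
    ((slice2_contDiff (f := fun a s => deriv (fun x' => q x' s i j) a)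
      (pd1_contDiff (f := fun a b => q a b i j) (hq i j)) x).differentiable (by simp)) xb
  have hR : HasDerivAt
      (fun s => 2 * pd1 q x s i j
        - 2 * ((deriv (fun x' => z x' s) x : ℝ) : ℂ)
            * ((deriv (fun t => z x t) s : ℝ) : ℂ)⁻¹ * pd2 q x s i j)
      (2 * pd2 (pd1 q) x xb i j - Dg) xb :=
    ((hp1qd.hasDerivAt).const_mul 2).sub (hgd.hasDerivAt)
  have hL' := hL.congr_of_eventuallyEq
    (Filter.Eventually.of_forall (fun s => (hA s i j).symm))
  have e1 : ((deriv (fun t => z x t) xb : ℝ) : ℂ) * pd2 (pd1 u) x (z x xb) i j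
      = 2 * pd2 (pd1 q) x xb i j - Dg := by
    rw [← Complex.real_smul]; exact hL'.unique hR
  -- e2
  have hFd : DifferentiableAt ℝ (fun t => (u x t * u x t * pd2 u x t) i j) (z x xb) := by
    simp only [Matrix.mul_apply]
    apply DifferentiableAt.fun_sum
    intro k _
    apply DifferentiableAt.mul
    · apply DifferentiableAt.fun_sum
      intro l _
      exact (hud2 i l (z x xb)).mul (hud2 l k (z x xb))
    · exact ((slice2_contDiff (f := fun a t => deriv (fun t' => u a t' k j) t)
        (pd2_contDiff (f := fun a b => u a b k j) (hu k j)) x).differentiable (by simp)) (z x xb)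
  have hFL : HasDerivAt (fun s => (u x (z x s) * u x (z x s) * pd2 u x (z x s)) i j)
      ((deriv (fun t => z x t) xb)
        • pd2 (fun x ζ => u x ζ * u x ζ * pd2 u x ζ) x (z x xb) i j) xb :=
    (hFd.hasDerivAt).scomp xb (hWd xb)
  have hFR : HasDerivAt
      (fun s => ε⁻¹ * 2 * (2 * ((deriv (fun x' => z x' s) x : ℝ) : ℂ)
          * ((deriv (fun t => z x t) s : ℝ) : ℂ)⁻¹ * pd2 q x s i j))
      (ε⁻¹ * 2 * Dg) xb := (hgd.hasDerivAt).const_mul _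
  have hFL' := hFL.congr_of_eventuallyEq
    (Filter.Eventually.of_forall (fun s => (hB s i j).symm))
  have e2 : ((deriv (fun t => z x t) xb : ℝ) : ℂ)
        * pd2 (fun x ζ => u x ζ * u x ζ * pd2 u x ζ) x (z x xb) i j
      = ε⁻¹ * 2 * Dg := by
    rw [← Complex.real_smul]; exact hFL'.unique hFR
  -- assemble
  have hqe : pd2 (pd1 q) x xb i j
      = ((deriv (fun t => z x t) xb : ℝ) : ℂ) * q x xb i j := by
    rw [hqxxb x xb]; simp [Matrix.smul_apply, smul_eq_mul]
  have hue : u x (z x xb) i j = 2 * q x xb i j := by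
    rw [hcomp x xb]; simp [Matrix.smul_apply, smul_eq_mul]
  rw [hqe] at e1
  rw [hue]
  have e2' : ε * (((deriv (fun t => z x t) xb : ℝ) : ℂ)
        * pd2 (fun x ζ => u x ζ * u x ζ * pd2 u x ζ) x (z x xb) i j) = 2 * Dg := by
    rw [e2, ← mul_assoc, ← mul_assoc, mul_inv_cancel₀ hεne, one_mul]
  have key : (ε * ((deriv (fun t => z x t) xb : ℝ) : ℂ))
        * pd2 (pd1 u) x (z x xb) i j
      = (ε * ((deriv (fun t => z x t) xb : ℝ) : ℂ))
        * (2 * q x xb i j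
          - ε / 2 * pd2 (fun x ζ => u x ζ * u x ζ * pd2 u x ζ) x (z x xb) i j) := by
    linear_combination ε * e1 + (ε/2) * e2'
  exact mul_left_cancel₀ (mul_ne_zero hεne (hWne xb)) key
end
end

section
/- Let 𝒮 be a smooth m×m-complex-matrix-valued function of (x,t) ∈ ℝ² with 𝒮² = I_m, and suppose that 𝒮_t = 𝒮_{xx} + 2 (ℱ (I_m + 𝒮))_x, where ℱ = −(1/2) 𝒮_x 𝒮. Then 𝒮 satisfies the generalized Heisenberg magnet equation 𝒮_t = (1/2) [𝒮, 𝒮_{xx}]. -/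
open Matrix

noncomputable section

section aux
variable {m : ℕ}

/-- Matrix-valued derivative, entrywise. -/
def HMAt (f : ℝ → Matrix (Fin m) (Fin m) ℂ) (f' : Matrix (Fin m) (Fin m) ℂ) (x : ℝ) : Prop :=
  ∀ i j, HasDerivAt (fun y => f y i j) (f' i j) x

lemma HMAt.add {f g : ℝ → Matrix (Fin m) (Fin m) ℂ} {f' g' x}
    (hf : HMAt f f' x) (hg : HMAt g g' x) :
    HMAt (fun y => f y + g y) (f' + g') x := fun i j => by
  simpa using (hf i j).fun_add (hg i j)

lemma HMAt.smul {f : ℝ → Matrix (Fin m) (Fin m) ℂ} {f' x} (c : ℂ) (hf : HMAt f f' x) :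
    HMAt (fun y => c • f y) (c • f') x := fun i j => by
  simpa [Matrix.smul_apply, smul_eq_mul] using (hf i j).const_mul c

lemma HMAt.neg {f : ℝ → Matrix (Fin m) (Fin m) ℂ} {f' x} (hf : HMAt f f' x) :
    HMAt (fun y => -f y) (-f') x := fun i j => by
  simpa using (hf i j).fun_neg

lemma HMAt.const (A : Matrix (Fin m) (Fin m) ℂ) (x : ℝ) :
    HMAt (fun _ => A) 0 x := fun i j => by
  simpa using hasDerivAt_const x (A i j)

lemma HMAt.mul {f g : ℝ → Matrix (Fin m) (Fin m) ℂ} {f' g' x}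
    (hf : HMAt f f' x) (hg : HMAt g g' x) :
    HMAt (fun y => f y * g y) (f' * g x + f x * g') x := fun i j => by
  have h : HasDerivAt (fun y => ∑ k, f y i k * g y k j)
      (∑ k, (f' i k * g x k j + f x i k * g' k j)) x :=
    HasDerivAt.fun_sum fun k _ => (hf i k).mul (hg k j)
  have e1 : (fun y => (f y * g y) i j) = fun y => ∑ k, f y i k * g y k j := by
    funext y; rw [Matrix.mul_apply]
  have e2 : (f' * g x + f x * g') i j = ∑ k, (f' i k * g x k j + f x i k * g' k j) := by
    simp [Matrix.add_apply, Matrix.mul_apply, Finset.sum_add_distrib]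
  rw [e1, e2]; exact h

lemma HMAt.unique {f : ℝ → Matrix (Fin m) (Fin m) ℂ} {f' f'' x}
    (h1 : HMAt f f' x) (h2 : HMAt f f'' x) : f' = f'' := by
  ext i j; exact (h1 i j).unique (h2 i j)

lemma pd1_eq_s16 {M : ℝ → ℝ → Matrix (Fin m) (Fin m) ℂ} {D x t}
    (h : HMAt (fun y => M y t) D x) : pd1 M x t = D := by
  ext i j
  simpa [pd1] using (h i j).deriv

lemma alg {m : ℕ} (A A1 A2 : Matrix (Fin m) (Fin m) ℂ)
    (e1 : A * A = 1)
    (k1 : A1 * A + A * A1 = 0)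
    (k2 : A2 * A + A1 * A1 + (A1 * A1 + A * A2) = 0) :
    A2 + (2 : ℂ) • ((-((1/2 : ℂ) • (A2 * A + A1 * A1))) * (1 + A)
      + (-((1/2 : ℂ) • (A1 * A))) * (0 + A1))
    = (1/2 : ℂ) • (A * A2 - A2 * A) := by
  have e1' : ∀ B : Matrix (Fin m) (Fin m) ℂ, A * (A * B) = B := fun B => by
    rw [← mul_assoc, e1, one_mul]
  have e2 : A1 * A = -(A * A1) := by
    rw [← sub_eq_zero, sub_neg_eq_add]; exact k1
  have e3 : A1 * A1 = (1/2 : ℂ) • (-(A2 * A) - A * A2) := by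
    have h2 : A1 * A1 + A1 * A1 = -(A2 * A) - A * A2 := by
      rw [← sub_eq_zero, ← k2]; abel
    calc A1 * A1 = (1/2 : ℂ) • (A1 * A1 + A1 * A1) := by
          rw [← two_smul ℂ, smul_smul]; norm_num
      _ = (1/2 : ℂ) • (-(A2 * A) - A * A2) := by rw [h2]
  have eB : (A1 * A) * A1 = -(A * (A1 * A1)) := by rw [e2, neg_mul, mul_assoc]
  rw [zero_add]
  simp only [neg_mul, smul_mul_assoc]
  rw [eB, e3]
  simp only [smul_sub, smul_neg, smul_mul_assoc, mul_smul_comm, sub_mul, mul_sub, neg_mul,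
    mul_neg, mul_add, add_mul, mul_one, one_mul, mul_assoc, e1, e1', smul_add, smul_smul]
  norm_num
  module

end aux

theorem statement16 (m : ℕ) (hm : 0 < m)
    (𝒮 : ℝ → ℝ → Matrix (Fin m) (Fin m) ℂ)
    (h𝒮 : MSmooth 𝒮)
    (h𝒮2 : ∀ x t : ℝ, 𝒮 x t * 𝒮 x t = 1)
    (ℱ : ℝ → ℝ → Matrix (Fin m) (Fin m) ℂ)
    (hℱ : ℱ = fun x t => -((1 / 2 : ℂ) • (pd1 𝒮 x t * 𝒮 x t)))
    (heq : ∀ x t : ℝ,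
      pd2 𝒮 x t = pd1 (pd1 𝒮) x t
        + (2 : ℂ) • pd1 (fun x t => ℱ x t * (1 + 𝒮 x t)) x t) :
    ∀ x t : ℝ,
      pd2 𝒮 x t =
        (1 / 2 : ℂ) • (𝒮 x t * pd1 (pd1 𝒮) x t - pd1 (pd1 𝒮) x t * 𝒮 x t) := by
  intro x t
  have hfe : ∀ i j, ContDiff ℝ (⊤ : ℕ∞) (fun y => 𝒮 y t i j) := fun i j =>
    (h𝒮 i j).comp (contDiff_id.prodMk contDiff_const)
  -- first derivative
  have hHS : ∀ y : ℝ, HMAt (fun z => 𝒮 z t) (pd1 𝒮 y t) y := by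
    intro y i j
    have h := ((hfe i j).differentiable (by simp) y).hasDerivAt
    simpa [pd1] using h
  -- second derivative
  have hHS1 : ∀ y : ℝ, HMAt (fun z => pd1 𝒮 z t) (pd1 (pd1 𝒮) y t) y := by
    intro y i j
    have hd : ContDiff ℝ (⊤ : ℕ∞) (deriv (fun z => 𝒮 z t i j)) :=
      (contDiff_infty_iff_deriv.mp (hfe i j)).2
    have h := ((hd.differentiable (by simp)) y).hasDerivAt
    have hfun : (fun z => pd1 𝒮 z t i j) = deriv (fun z => 𝒮 z t i j) := by
      funext z; simp [pd1]
    have hval : pd1 (pd1 𝒮) y t i j = deriv (deriv (fun z => 𝒮 z t i j)) y := by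
      simp [pd1]
    rw [hfun, hval]; exact h
  -- S² = 1 differentiated
  have key1 : ∀ y : ℝ, pd1 𝒮 y t * 𝒮 y t + 𝒮 y t * pd1 𝒮 y t = 0 := by
    intro y
    have h1 : HMAt (fun z => 𝒮 z t * 𝒮 z t)
        (pd1 𝒮 y t * 𝒮 y t + 𝒮 y t * pd1 𝒮 y t) y := (hHS y).mul (hHS y)
    have hc : (fun z : ℝ => 𝒮 z t * 𝒮 z t) = fun _ => (1 : Matrix (Fin m) (Fin m) ℂ) := by
      funext z; exact h𝒮2 z t
    rw [hc] at h1
    exact h1.unique (HMAt.const 1 y)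
  -- differentiated again at x
  have key2 : pd1 (pd1 𝒮) x t * 𝒮 x t + pd1 𝒮 x t * pd1 𝒮 x t
      + (pd1 𝒮 x t * pd1 𝒮 x t + 𝒮 x t * pd1 (pd1 𝒮) x t) = 0 := by
    have h1 : HMAt (fun z => pd1 𝒮 z t * 𝒮 z t + 𝒮 z t * pd1 𝒮 z t)
        (pd1 (pd1 𝒮) x t * 𝒮 x t + pd1 𝒮 x t * pd1 𝒮 x t
          + (pd1 𝒮 x t * pd1 𝒮 x t + 𝒮 x t * pd1 (pd1 𝒮) x t)) x :=
      ((hHS1 x).mul (hHS x)).add ((hHS x).mul (hHS1 x))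
    have hc : (fun z : ℝ => pd1 𝒮 z t * 𝒮 z t + 𝒮 z t * pd1 𝒮 z t)
        = fun _ => (0 : Matrix (Fin m) (Fin m) ℂ) := funext key1
    rw [hc] at h1
    exact h1.unique (HMAt.const 0 x)
  -- derivative of ℱ (1 + 𝒮)
  have hG : HMAt (fun z => ℱ z t * (1 + 𝒮 z t))
      ((-((1/2 : ℂ) • (pd1 (pd1 𝒮) x t * 𝒮 x t + pd1 𝒮 x t * pd1 𝒮 x t))) * (1 + 𝒮 x t)
        + (-((1/2 : ℂ) • (pd1 𝒮 x t * 𝒮 x t))) * (0 + pd1 𝒮 x t)) x := by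
    have hF : HMAt (fun z => -((1/2 : ℂ) • (pd1 𝒮 z t * 𝒮 z t)))
        (-((1/2 : ℂ) • (pd1 (pd1 𝒮) x t * 𝒮 x t + pd1 𝒮 x t * pd1 𝒮 x t))) x :=
      (HMAt.smul _ ((hHS1 x).mul (hHS x))).neg
    have h1S : HMAt (fun z => (1 : Matrix (Fin m) (Fin m) ℂ) + 𝒮 z t)
        (0 + pd1 𝒮 x t) x := (HMAt.const 1 x).add (hHS x)
    have h := hF.mul h1S
    rw [hℱ]
    exact h
  have hpd1G := pd1_eq_s16 (M := fun a b => ℱ a b * (1 + 𝒮 a b)) hG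
  have hmain := heq x t
  rw [hpd1G] at hmain
  rw [hmain]
  exact alg (𝒮 x t) (pd1 𝒮 x t) (pd1 (pd1 𝒮) x t) (h𝒮2 x t) (key1 x) key2
end
end

section
/- Let θ : ℝ² → ℝ be smooth (variables (x,x̄)), let f : ℝ → ℂ be a smooth nowhere-vanishing function of x̄ alone, and set g(x,x̄) = f(x̄)(cos(θ/2) I₂ + sin(θ/2) 𝕀), where 𝕀 = [[0,−1],[1,0]]. Let J = diag(1,−1) and g̃ = J g J. Then g is invertible at every point, and g satisfies the equation (g_x g^{-1})_{x̄} = (1/4)(g g̃^{-1} − g̃ g^{-1}) if and only if θ solves the sine-Gordon equation θ_{x x̄} = sin θ. -/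
open Matrix

noncomputable section

lemma key1 (F c s : ℂ) (hF : F ≠ 0) (h1 : c^2 + s^2 = 1) :
    !![F*c, -(F*s); F*s, F*c] * (F⁻¹ • !![c, s; -s, c]) = 1 := by
  ext i j
  fin_cases i <;> fin_cases j <;>
    simp [Matrix.mul_apply, Fin.sum_univ_two, Matrix.one_apply] <;>
    field_simp <;>
    first
      | ring1
      | linear_combination F * h1
      | linear_combination (-F) * h1
      | linear_combination h1

lemma key2 (F c s : ℂ) (hF : F ≠ 0) (h1 : c^2 + s^2 = 1) :
    !![F*c, F*s; -(F*s), F*c] * (F⁻¹ • !![c, -s; s, c]) = 1 := by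
  ext i j
  fin_cases i <;> fin_cases j <;>
    simp [Matrix.mul_apply, Fin.sum_univ_two, Matrix.one_apply] <;>
    field_simp <;>
    first
      | ring1
      | linear_combination F * h1
      | linear_combination (-F) * h1
      | linear_combination h1

lemma keyP (F c s a : ℂ) (hF : F ≠ 0) (h1 : c^2 + s^2 = 1) :
    !![F * (-s*a), -(F*(c*a)); F*(c*a), F*(-s*a)] * (F⁻¹ • !![c, s; -s, c])
      = a • !![0, -1; 1, 0] := by
  ext i j
  fin_cases i <;> fin_cases j <;>
    simp [Matrix.mul_apply, Fin.sum_univ_two] <;>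
    field_simp <;>
    first
      | ring1
      | linear_combination (F*a) * h1
      | linear_combination (-(F*a)) * h1
      | linear_combination (-(F*a) - F^2*a) * h1
      | linear_combination (F*a + F^2*a) * h1
      | linear_combination (F^2*a) * h1
      | linear_combination (-(F^2*a)) * h1
      | linear_combination (-a) * h1
      | linear_combination a * h1

lemma keyR (F c s : ℂ) (hF : F ≠ 0) (h1 : c^2 + s^2 = 1) :
    (1/4 : ℂ) • (!![F*c, -(F*s); F*s, F*c] * (F⁻¹ • !![c, -s; s, c])
      - !![F*c, F*s; -(F*s), F*c] * (F⁻¹ • !![c, s; -s, c])) = (s*c) • !![0, -1; 1, 0] := by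
  ext i j
  fin_cases i <;> fin_cases j <;>
    simp [Matrix.mul_apply, Fin.sum_univ_two] <;>
    field_simp <;> ring1

theorem statement18
    (θ : ℝ → ℝ → ℝ)
    (hθ : ContDiff ℝ (⊤ : ℕ∞) fun v : ℝ × ℝ => θ v.1 v.2)
    (f : ℝ → ℂ)
    (hf : ContDiff ℝ (⊤ : ℕ∞) f)
    (hf0 : ∀ s : ℝ, f s ≠ 0)
    (II : Matrix (Fin 2) (Fin 2) ℂ) (hII : II = !![0, -1; 1, 0])
    (J : Matrix (Fin 2) (Fin 2) ℂ) (hJ : J = !![1, 0; 0, -1])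
    (g : ℝ → ℝ → Matrix (Fin 2) (Fin 2) ℂ)
    (hg : g = fun x xb =>
      f xb • (((Real.cos (θ x xb / 2) : ℝ) : ℂ) • (1 : Matrix (Fin 2) (Fin 2) ℂ)
        + ((Real.sin (θ x xb / 2) : ℝ) : ℂ) • II))
    (gt : ℝ → ℝ → Matrix (Fin 2) (Fin 2) ℂ)
    (hgt : gt = fun x xb => J * g x xb * J) :
    (∀ x xb : ℝ, IsUnit (g x xb)) ∧
    ((∀ x xb : ℝ,
        pd2 (fun x xb => pd1 g x xb * (g x xb)⁻¹) x xb =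
          (1 / 4 : ℂ) • (g x xb * (gt x xb)⁻¹ - gt x xb * (g x xb)⁻¹))
      ↔ (∀ x xb : ℝ,
          deriv (fun s => deriv (fun x' => θ x' s) x) xb = Real.sin (θ x xb))) := by
  -- derivative of θ in the first variable
  have hθd' : ∀ x t : ℝ, HasDerivAt (fun x' => θ x' t)
      (fderiv ℝ (fun v : ℝ × ℝ => θ v.1 v.2) (x, t) (1, 0)) x := by
    intro x t
    have h1 : HasFDerivAt (fun v : ℝ × ℝ => θ v.1 v.2)
        (fderiv ℝ (fun v : ℝ × ℝ => θ v.1 v.2) (x, t)) (x, t) :=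
      (hθ.differentiable (by simp) (x, t)).hasFDerivAt
    have h2 : HasDerivAt (fun x' : ℝ => (x', t)) ((1 : ℝ), (0 : ℝ)) x := by
      simpa using ((hasDerivAt_id x).prodMk (hasDerivAt_const x t))
    exact h1.comp_hasDerivAt x h2
  have hθd : ∀ x t : ℝ, HasDerivAt (fun x' => θ x' t) (deriv (fun x' => θ x' t) x) x := by
    intro x t
    have h := hθd' x t
    rw [h.deriv]
    exact h
  have hθ1diff : ∀ x : ℝ, Differentiable ℝ (fun t => deriv (fun x' => θ x' t) x) := by
    intro x
    have hsm : ContDiff ℝ (⊤ : ℕ∞)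
        (fun t : ℝ => fderiv ℝ (fun v : ℝ × ℝ => θ v.1 v.2) (x, t) (1, 0)) :=
      ContDiff.fderiv_apply (𝕜 := ℝ) (f := fun (_ : ℝ) (v : ℝ × ℝ) => θ v.1 v.2)
        (g := fun t : ℝ => (x, t)) (k := fun _ : ℝ => ((1:ℝ), (0:ℝ)))
        (hθ.comp contDiff_snd) (contDiff_const.prodMk contDiff_id) contDiff_const
        (by exact_mod_cast le_top)
    have heq : (fun t : ℝ => deriv (fun x' => θ x' t) x)
        = fun t : ℝ => fderiv ℝ (fun v : ℝ × ℝ => θ v.1 v.2) (x, t) (1, 0) :=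
      funext fun t => (hθd' x t).deriv
    rw [heq]
    exact hsm.differentiable (by simp)
  have hθ2 : ∀ x xb : ℝ, HasDerivAt (fun t => deriv (fun x' => θ x' t) x)
      (deriv (fun s => deriv (fun x' => θ x' s) x) xb) xb :=
    fun x xb => ((hθ1diff x) xb).hasDerivAt
  -- derivatives of the entries
  have hcC : ∀ x xb : ℝ, HasDerivAt (fun x' => ((Real.cos (θ x' xb / 2) : ℝ) : ℂ))
      ((-Real.sin (θ x xb / 2) * (deriv (fun x' => θ x' xb) x / 2) : ℝ) : ℂ) x := by
    intro x xb
    exact ((Real.hasDerivAt_cos (θ x xb / 2)).comp x ((hθd x xb).div_const 2)).ofReal_comp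
  have hsC : ∀ x xb : ℝ, HasDerivAt (fun x' => ((Real.sin (θ x' xb / 2) : ℝ) : ℂ))
      ((Real.cos (θ x xb / 2) * (deriv (fun x' => θ x' xb) x / 2) : ℝ) : ℂ) x := by
    intro x xb
    exact ((Real.hasDerivAt_sin (θ x xb / 2)).comp x ((hθd x xb).div_const 2)).ofReal_comp
  -- explicit matrices
  have hone : ∀ x xb : ℝ, ((Real.cos (θ x xb / 2) : ℝ) : ℂ)^2
      + ((Real.sin (θ x xb / 2) : ℝ) : ℂ)^2 = 1 := by
    intro x xb
    norm_cast
    exact Real.cos_sq_add_sin_sq _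
  have hgm : ∀ x xb : ℝ, g x xb =
      !![f xb * ((Real.cos (θ x xb / 2) : ℝ) : ℂ), -(f xb * ((Real.sin (θ x xb / 2) : ℝ) : ℂ));
         f xb * ((Real.sin (θ x xb / 2) : ℝ) : ℂ), f xb * ((Real.cos (θ x xb / 2) : ℝ) : ℂ)] := by
    intro x xb
    simp only [hg, hII]
    ext i j
    fin_cases i <;> fin_cases j <;> simp [Matrix.one_apply] <;> ring
  have hgtm : ∀ x xb : ℝ, gt x xb =
      !![f xb * ((Real.cos (θ x xb / 2) : ℝ) : ℂ), f xb * ((Real.sin (θ x xb / 2) : ℝ) : ℂ);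
         -(f xb * ((Real.sin (θ x xb / 2) : ℝ) : ℂ)), f xb * ((Real.cos (θ x xb / 2) : ℝ) : ℂ)] := by
    intro x xb
    simp only [hgt, hJ, hgm]
    ext i j
    fin_cases i <;> fin_cases j <;>
      simp [Matrix.mul_apply, Fin.sum_univ_two] <;> ring
  have hgright : ∀ x xb : ℝ, g x xb * ((f xb)⁻¹ •
      !![((Real.cos (θ x xb / 2) : ℝ) : ℂ), ((Real.sin (θ x xb / 2) : ℝ) : ℂ);
         -((Real.sin (θ x xb / 2) : ℝ) : ℂ), ((Real.cos (θ x xb / 2) : ℝ) : ℂ)]) = 1 := by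
    intro x xb
    rw [hgm]
    exact key1 _ _ _ (hf0 xb) (hone x xb)
  have hinv : ∀ x xb : ℝ, (g x xb)⁻¹ = (f xb)⁻¹ •
      !![((Real.cos (θ x xb / 2) : ℝ) : ℂ), ((Real.sin (θ x xb / 2) : ℝ) : ℂ);
         -((Real.sin (θ x xb / 2) : ℝ) : ℂ), ((Real.cos (θ x xb / 2) : ℝ) : ℂ)] :=
    fun x xb => Matrix.inv_eq_right_inv (hgright x xb)
  have hgtinv : ∀ x xb : ℝ, (gt x xb)⁻¹ = (f xb)⁻¹ •
      !![((Real.cos (θ x xb / 2) : ℝ) : ℂ), -((Real.sin (θ x xb / 2) : ℝ) : ℂ);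
         ((Real.sin (θ x xb / 2) : ℝ) : ℂ), ((Real.cos (θ x xb / 2) : ℝ) : ℂ)] := by
    intro x xb
    refine Matrix.inv_eq_right_inv ?_
    rw [hgtm]
    exact key2 _ _ _ (hf0 xb) (hone x xb)
  -- pd1 g
  have hpd1 : ∀ x xb : ℝ, pd1 g x xb =
      !![f xb * (-((Real.sin (θ x xb / 2) : ℝ) : ℂ) * (((deriv (fun x' => θ x' xb) x : ℝ) : ℂ) / 2)),
         -(f xb * (((Real.cos (θ x xb / 2) : ℝ) : ℂ) * (((deriv (fun x' => θ x' xb) x : ℝ) : ℂ) / 2)));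
         f xb * (((Real.cos (θ x xb / 2) : ℝ) : ℂ) * (((deriv (fun x' => θ x' xb) x : ℝ) : ℂ) / 2)),
         f xb * (-((Real.sin (θ x xb / 2) : ℝ) : ℂ) * (((deriv (fun x' => θ x' xb) x : ℝ) : ℂ) / 2))] := by
    intro x xb
    ext i j
    fin_cases i <;> fin_cases j
    · show deriv (fun x' => g x' xb 0 0) x = _
      simp only [Fin.mk_zero, Fin.mk_one, hgm, Matrix.of_apply, Matrix.cons_val', Matrix.cons_val_zero, Matrix.empty_val',
        Matrix.cons_val_fin_one]
      rw [(((hcC x xb).const_mul (f xb))).deriv]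
      push_cast
      ring
    · show deriv (fun x' => g x' xb 0 1) x = _
      simp only [Fin.mk_zero, Fin.mk_one, hgm, Matrix.of_apply, Matrix.cons_val', Matrix.cons_val_zero, Matrix.cons_val_one,
        Matrix.head_cons, Matrix.empty_val', Matrix.cons_val_fin_one, Matrix.head_fin_const]
      rw [((((hsC x xb).const_mul (f xb))).fun_neg).deriv]
      push_cast
      ring
    · show deriv (fun x' => g x' xb 1 0) x = _
      simp only [Fin.mk_zero, Fin.mk_one, hgm, Matrix.of_apply, Matrix.cons_val', Matrix.cons_val_zero, Matrix.cons_val_one,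
        Matrix.head_cons, Matrix.empty_val', Matrix.cons_val_fin_one, Matrix.head_fin_const]
      rw [(((hsC x xb).const_mul (f xb))).deriv]
      push_cast
      ring
    · show deriv (fun x' => g x' xb 1 1) x = _
      simp only [Fin.mk_zero, Fin.mk_one, hgm, Matrix.of_apply, Matrix.cons_val', Matrix.cons_val_zero, Matrix.cons_val_one,
        Matrix.head_cons, Matrix.empty_val', Matrix.cons_val_fin_one, Matrix.head_fin_const]
      rw [(((hcC x xb).const_mul (f xb))).deriv]
      push_cast
      ring
  -- the product pd1 g * g⁻¹
  have hP : ∀ x xb : ℝ, pd1 g x xb * (g x xb)⁻¹ =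
      (((deriv (fun x' => θ x' xb) x : ℝ) : ℂ) / 2) • !![0, -1; 1, 0] := by
    intro x xb
    rw [hpd1, hinv]
    exact keyP _ _ _ _ (hf0 xb) (hone x xb)
  -- left-hand side
  have hL : ∀ x xb : ℝ, pd2 (fun x xb => pd1 g x xb * (g x xb)⁻¹) x xb =
      (((deriv (fun s => deriv (fun x' => θ x' s) x) xb : ℝ) : ℂ) / 2) • !![0, -1; 1, 0] := by
    intro x xb
    have hd : HasDerivAt (fun t : ℝ => ((deriv (fun x' => θ x' t) x : ℝ) : ℂ))
        ((deriv (fun s => deriv (fun x' => θ x' s) x) xb : ℝ) : ℂ) xb :=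
      (hθ2 x xb).ofReal_comp
    ext i j
    fin_cases i <;> fin_cases j
    · show deriv (fun t => (pd1 g x t * (g x t)⁻¹) 0 0) xb = _
      simp [hP]
    · show deriv (fun t => (pd1 g x t * (g x t)⁻¹) 0 1) xb = _
      simp only [Fin.mk_zero, Fin.mk_one, hP, Matrix.smul_apply, Matrix.of_apply, Matrix.cons_val', Matrix.cons_val_zero,
        Matrix.cons_val_one, Matrix.head_cons, Matrix.empty_val', Matrix.cons_val_fin_one,
        Matrix.head_fin_const, smul_eq_mul]
      rw [((hd.div_const 2).mul_const (-1 : ℂ)).deriv]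
    · show deriv (fun t => (pd1 g x t * (g x t)⁻¹) 1 0) xb = _
      simp only [Fin.mk_zero, Fin.mk_one, hP, Matrix.smul_apply, Matrix.of_apply, Matrix.cons_val', Matrix.cons_val_zero,
        Matrix.cons_val_one, Matrix.head_cons, Matrix.empty_val', Matrix.cons_val_fin_one,
        Matrix.head_fin_const, smul_eq_mul]
      rw [((hd.div_const 2).mul_const (1 : ℂ)).deriv]
    · show deriv (fun t => (pd1 g x t * (g x t)⁻¹) 1 1) xb = _
      simp [hP]
  -- right-hand side
  have hR : ∀ x xb : ℝ, (1 / 4 : ℂ) • (g x xb * (gt x xb)⁻¹ - gt x xb * (g x xb)⁻¹) =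
      (((Real.sin (θ x xb / 2) : ℝ) : ℂ) * ((Real.cos (θ x xb / 2) : ℝ) : ℂ)) • !![0, -1; 1, 0] := by
    intro x xb
    rw [hinv, hgtinv, hgm, hgtm]
    exact keyR _ _ _ (hf0 xb) (hone x xb)
  have hdouble : ∀ x xb : ℝ, Real.sin (θ x xb)
      = 2 * (Real.sin (θ x xb / 2) * Real.cos (θ x xb / 2)) := by
    intro x xb
    rw [show θ x xb = 2 * (θ x xb / 2) by ring, Real.sin_two_mul]
    ring
  refine ⟨fun x xb => (Matrix.isUnit_iff_isUnit_det _).2 (Matrix.isUnit_det_of_right_inverse (hgright x xb)), ?_, ?_⟩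
  · intro h x xb
    have h1 := h x xb
    rw [hL, hR] at h1
    have h10 := congr_fun (congr_fun h1 1) 0
    simp only [Matrix.smul_apply, Matrix.of_apply, Matrix.cons_val', Matrix.cons_val_zero,
      Matrix.cons_val_one, Matrix.head_cons, Matrix.empty_val', Matrix.cons_val_fin_one,
      Matrix.head_fin_const, smul_eq_mul, mul_one] at h10
    have h10' : deriv (fun s => deriv (fun x' => θ x' s) x) xb / 2
        = Real.sin (θ x xb / 2) * Real.cos (θ x xb / 2) := by exact_mod_cast h10
    rw [hdouble x xb]
    linarith
  · intro h x xb
    rw [hL, hR, h x xb]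
    congr 1
    rw [hdouble x xb]
    push_cast
    ring
end
end
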